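/- arXiv:1701.00052 — 2 statements merged into one kernel-verified Lean document; each statement's English description precedes it below -/
import Mathlib

section
/- For n ≥ 3 and 1 < k < n, p(1, n) = p(n, n) > p(k, n): the maximum probability of selecting the k-th best of n candidates is strictly largest when k = 1 or k = n. -/
open Finset
open scoped Classical

/-- Absolute rank (1-based) of the `j`-th candidate when the arrival order is
given by the permutation `σ` : the `j`-th candidate interviewed has rank `σ j + 1`. -/
def absRank {n : ℕ} (σ : Equiv.Perm (Fin n)) (j : Fin n) : ℕ := (σ j : ℕ) + 1

/-- Relative rank (1-based) of the `j`-th candidate among the first `j` candidates. -/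
def relRank {n : ℕ} (σ : Equiv.Perm (Fin n)) (j : Fin n) : ℕ :=
  (Finset.univ.filter fun i : Fin n => i ≤ j ∧ σ i ≤ σ j).card

/-- A stopping rule adapted to the sequence of relative ranks: the decision to stop at
stage `τ σ` depends only on the relative ranks observed up to that stage. -/
def IsStoppingRule {n : ℕ} (τ : Equiv.Perm (Fin n) → Fin n) : Prop :=
  ∀ σ σ' : Equiv.Perm (Fin n), (∀ i, i ≤ τ σ → relRank σ i = relRank σ' i) → τ σ' = τ σ

/-- The probability (w.r.t. the uniform distribution on arrival orders) that the
stopping rule `τ` selects a candidate whose absolute rank lies in `Γ`. -/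
noncomputable def selectProb (n : ℕ) (Γ : Finset ℕ) (τ : Equiv.Perm (Fin n) → Fin n) : ℝ :=
  ((Finset.univ.filter fun σ : Equiv.Perm (Fin n) => absRank σ (τ σ) ∈ Γ).card : ℝ) /
    (Nat.factorial n : ℝ)

/-- `p(Γ, n)`: the maximal probability of selecting a candidate with absolute rank in `Γ`. -/
noncomputable def pSet (n : ℕ) (Γ : Finset ℕ) : ℝ :=
  sSup {x : ℝ | ∃ τ : Equiv.Perm (Fin n) → Fin n, IsStoppingRule τ ∧ x = selectProb n Γ τ}

/-- `p(k, n)`: the maximal probability of selecting the `k`-th best of `n` candidates. -/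
noncomputable def pRank (n k : ℕ) : ℝ := pSet n {k}

namespace Secretary


abbrev Code (n : ℕ) := ∀ t : Fin n, Fin (t.val + 1)

instance (n : ℕ) : Inhabited (Code n) := ⟨fun _ => ⟨0, Nat.succ_pos _⟩⟩

/-- 1-based relative rank read off a code, as a function on ℕ (junk 0 out of range). -/
def cv {n : ℕ} (c : Code n) (s : ℕ) : ℕ := if h : s < n then (c ⟨s, h⟩ : ℕ) + 1 else 0

/-- Evolution of the (1-based) rank of a fixed candidate as later candidates arrive.
`evo g f t r` : current stage `t`, current rank `r`, `f` more arrivals to process. -/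
def evo (g : ℕ → ℕ) : ℕ → ℕ → ℕ → ℕ
  | 0, _, r => r
  | f+1, t, r => evo g f (t+1) (if g (t+1) ≤ r then r + 1 else r)

def Nt (n t : ℕ) : ℕ := ∏ i ∈ Finset.Ico t n, (i + 1)

def cls {n : ℕ} (t : ℕ) (c0 : Code n) : Finset (Code n) :=
  Finset.univ.filter fun c => ∀ i : Fin n, (i : ℕ) < t → c i = c0 i

noncomputable def payoff (n k : ℕ) (c : Code n) (j : ℕ) : ℝ :=
  if evo (cv c) (n - 1 - j) j (cv c j) = k then 1 else 0

def Adapted {n : ℕ} (τ : Code n → Fin n) : Prop :=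
  ∀ c c' : Code n, (∀ i : Fin n, i ≤ τ c → c i = c' i) → τ c' = τ c

/-! ### Nt lemmas -/

lemma Nt_of_ge {n t : ℕ} (h : n ≤ t) : Nt n t = 1 := by
  rw [Nt, Finset.Ico_eq_empty (by omega), Finset.prod_empty]

lemma Nt_step {n t : ℕ} (h : t < n) : Nt n t = (t + 1) * Nt n (t + 1) := by
  rw [Nt, Nt, Finset.prod_eq_prod_Ico_succ_bot h]

lemma Nt_zero (n : ℕ) : Nt n 0 = n.factorial := by
  induction n with
  | zero => simp [Nt]
  | succ m ih =>
      rw [Nt, ← Finset.range_eq_Ico, Finset.prod_range_succ, Finset.range_eq_Ico, ← Nt]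
      rw [ih, Nat.factorial_succ]; ring

lemma Nt_pos (n t : ℕ) : 0 < Nt n t := Finset.prod_pos (fun i _ => Nat.succ_pos i)


noncomputable def Q (n k : ℕ) : ℕ → ℕ → ℝ
  | 0, x => if x = k then 1 else 0
  | d+1, x => ((x : ℝ) * Q n k d (x+1) + ((n - d - x : ℕ) : ℝ) * Q n k d x) / ((n - d : ℕ) : ℝ)

lemma Q_sum (n k : ℕ) (hk1 : 1 ≤ k) (hkn : k ≤ n) :
    ∀ d, d ≤ n - 1 → ∑ x ∈ Finset.Icc 1 (n - d), Q n k d x = ((n - d : ℕ) : ℝ) / n := by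
  intro d
  induction d with
  | zero =>
      intro _
      have hn : (0:ℝ) < (n:ℝ) := by
        have : 0 < n := by omega
        exact_mod_cast this
      simp only [Q, Nat.sub_zero]
      rw [Finset.sum_ite_eq' (Finset.Icc 1 n) k (fun _ => (1:ℝ))]
      rw [if_pos (Finset.mem_Icc.mpr ⟨hk1, hkn⟩)]
      field_simp
  | succ d ih =>
      intro hd
      have hdn : d ≤ n - 1 := by omega
      have ihs := ih hdn
      set m := n - d - 1 with hm
      have hm1 : 1 ≤ m := by omega
      have hnd : n - d = m + 1 := by omega
      have hnd1 : n - (d+1) = m := by omega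
      have hmR : ((m:ℝ) + 1) ≠ 0 := by positivity
      have key : ∀ x ∈ Finset.Icc 1 m,
          Q n k (d+1) x
            = ((x : ℝ) * Q n k d (x+1) + ((n - d - x : ℕ) : ℝ) * Q n k d x) / ((m:ℝ)+1) := by
        intro x hx
        rw [Q, hnd]
        push_cast
        ring_nf
      rw [hnd1, Finset.sum_congr rfl key, ← Finset.sum_div]
      rw [Finset.sum_add_distrib]
      -- first sum: reindex x ↦ x+1
      have e1 : ∑ x ∈ Finset.Icc 1 m, (x : ℝ) * Q n k d (x+1)
          = ∑ y ∈ Finset.Icc 2 (m+1), ((y - 1 : ℕ) : ℝ) * Q n k d y := by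
        rw [← Finset.map_add_right_Icc 1 m 1]
        rw [Finset.sum_map]
        apply Finset.sum_congr rfl
        intro x hx
        simp only [addRightEmbedding_apply]
        norm_num
      have e1' : ∑ y ∈ Finset.Icc 2 (m+1), ((y - 1 : ℕ) : ℝ) * Q n k d y
          = ∑ y ∈ Finset.Icc 1 (m+1), ((y - 1 : ℕ) : ℝ) * Q n k d y := by
        have : Finset.Icc 1 (m+1) = insert 1 (Finset.Icc 2 (m+1)) := by
          ext a; simp [Finset.mem_Icc, Finset.mem_insert]; omega
        rw [this, Finset.sum_insert (by simp [Finset.mem_Icc])]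
        norm_num
      have e2 : ∑ x ∈ Finset.Icc 1 m, ((n - d - x : ℕ) : ℝ) * Q n k d x
          = ∑ y ∈ Finset.Icc 1 (m+1), ((n - d - y : ℕ) : ℝ) * Q n k d y := by
        have : Finset.Icc 1 (m+1) = insert (m+1) (Finset.Icc 1 m) := by
          ext a; simp [Finset.mem_Icc, Finset.mem_insert]; omega
        rw [this, Finset.sum_insert (by simp [Finset.mem_Icc])]
        have : (n - d - (m+1) : ℕ) = 0 := by omega
        rw [this]
        norm_num
      rw [e1, e1', e2, ← Finset.sum_add_distrib]
      have e3 : ∀ y ∈ Finset.Icc 1 (m+1),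
          ((y - 1 : ℕ) : ℝ) * Q n k d y + ((n - d - y : ℕ) : ℝ) * Q n k d y
            = (m : ℝ) * Q n k d y := by
        intro y hy
        rw [Finset.mem_Icc] at hy
        have : ((y - 1 : ℕ) : ℝ) + ((n - d - y : ℕ) : ℝ) = (m : ℝ) := by
          have h1 : (y - 1 : ℕ) + (n - d - y : ℕ) = m := by omega
          exact_mod_cast congrArg (Nat.cast : ℕ → ℝ) h1
        linear_combination Q n k d y * this
      rw [Finset.sum_congr rfl e3, ← Finset.mul_sum, ← hnd, ihs, hnd]
      have hnR : ((n:ℝ)) ≠ 0 := by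
        have : 0 < n := by omega
        positivity
      push_cast
      field_simp


noncomputable def V (n k : ℕ) : ℕ → ℝ
  | 0 => 1 / n
  | d+1 => (((n - d - 1 : ℕ) : ℝ))⁻¹ *
      ∑ x ∈ Finset.Icc 1 (n - d - 1), max (Q n k (d+1) x) (V n k d)

lemma Q_nonneg (n k : ℕ) : ∀ d x, 0 ≤ Q n k d x := by
  intro d
  induction d with
  | zero => intro x; rw [Q]; positivity
  | succ d ih =>
      intro x; rw [Q]
      have h1 := ih (x+1); have h2 := ih x
      positivity

lemma V_nonneg (n k : ℕ) : ∀ d, 0 ≤ V n k d := by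
  intro d
  induction d with
  | zero => rw [V]; positivity
  | succ d ih =>
      rw [V]
      have : ∀ x ∈ Finset.Icc 1 (n - d - 1), (0:ℝ) ≤ max (Q n k (d+1) x) (V n k d) :=
        fun x _ => le_trans ih (le_max_right _ _)
      have := Finset.sum_nonneg this
      positivity

lemma Q_one_eq (n : ℕ) (hn : 1 ≤ n) :
    ∀ d, d ≤ n - 1 → ∀ x, Q n 1 d x = if x = 1 then ((n - d : ℕ) : ℝ) / n else 0 := by
  intro d
  induction d with
  | zero =>
      intro _ x
      rw [Q, Nat.sub_zero]
      have hnR : ((n:ℝ)) ≠ 0 := by positivity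
      by_cases h : x = 1 <;> simp [h, div_self hnR]
  | succ d ih =>
      intro hd x
      have hdn : d ≤ n - 1 := by omega
      have hndR : ((n - d : ℕ) : ℝ) ≠ 0 := by
        have : 0 < n - d := by omega
        positivity
      have hnR : ((n:ℝ)) ≠ 0 := by positivity
      rw [Q, ih hdn (x+1), ih hdn x]
      by_cases h : x = 1
      · subst h
        norm_num
        have h2 : (n - d - 1 : ℕ) = (n - (d+1) : ℕ) := by omega
        rw [h2]
        have hcast : ((n - d : ℕ) : ℝ) = ((n - (d+1) : ℕ) : ℝ) + 1 := by
          have : (n - d : ℕ) = (n - (d+1) : ℕ) + 1 := by omega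
          exact_mod_cast this
        field_simp [hcast]
      · by_cases h0 : x = 0
        · subst h0; simp
        · have hx1 : x + 1 ≠ 1 := by omega
          simp [h, hx1, h0]

lemma Q_top_eq (n : ℕ) (hn : 1 ≤ n) :
    ∀ d, d ≤ n - 1 → ∀ x, Q n n d x = if x = n - d then ((n - d : ℕ) : ℝ) / n else 0 := by
  intro d
  induction d with
  | zero =>
      intro _ x
      rw [Q, Nat.sub_zero]
      have hnR : ((n:ℝ)) ≠ 0 := by positivity
      by_cases h : x = n <;> simp [h, div_self hnR]
  | succ d ih =>
      intro hd x
      have hdn : d ≤ n - 1 := by omega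
      have hnd2 : 2 ≤ n - d := by omega
      have hndR : ((n - d : ℕ) : ℝ) ≠ 0 := by
        have : 0 < n - d := by omega
        positivity
      have hnR : ((n:ℝ)) ≠ 0 := by positivity
      rw [Q, ih hdn (x+1), ih hdn x]
      by_cases h : x = n - (d+1)
      · subst h
        have h1 : n - (d+1) + 1 = n - d := by omega
        have h2 : ¬ (n - (d+1) = n - d) := by omega
        simp only [h1, if_pos rfl, if_neg h2, if_pos rfl, eq_self_iff_true, if_true]
        have hcast : ((n - d : ℕ) : ℝ) = ((n - (d+1) : ℕ) : ℝ) + 1 := by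
          have : (n - d : ℕ) = (n - (d+1) : ℕ) + 1 := by omega
          exact_mod_cast this
        field_simp [hcast]
        ring
      · have hx1 : x + 1 ≠ n - d := by omega
        rw [if_neg hx1, if_neg h]
        by_cases h2 : x = n - d
        · subst h2
          have : (n - d - (n - d) : ℕ) = 0 := by omega
          rw [this]
          norm_num
        · rw [if_neg h2]
          norm_num

lemma sum_if_eq_gen {s : Finset ℕ} {a : ℕ} (ha : a ∈ s) (A B : ℝ) :
    ∑ x ∈ s, (if x = a then A else B) = (s.card : ℝ) * B + (A - B) := by
  have h : ∀ x ∈ s, (if x = a then A else B) = B + (if x = a then (A - B) else 0) := by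
    intro x _; by_cases h : x = a <;> simp [h]
  rw [Finset.sum_congr rfl h, Finset.sum_add_distrib, Finset.sum_const,
    Finset.sum_ite_eq' s a (fun _ => A - B), if_pos ha, nsmul_eq_mul]

lemma sum_if_two {s : Finset ℕ} {a b : ℕ} (ha : a ∈ s) (hb : b ∈ s) (hab : a ≠ b) (A B C : ℝ) :
    ∑ x ∈ s, (if x = a then A else if x = b then B else C)
      = (s.card : ℝ) * C + (A - C) + (B - C) := by
  have h : ∀ x ∈ s, (if x = a then A else if x = b then B else C)
      = C + (if x = a then (A - C) else 0) + (if x = b then (B - C) else 0) := by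
    intro x _
    by_cases h1 : x = a
    · subst h1; simp [hab]
    · by_cases h2 : x = b
      · subst h2; simp [h1]
      · simp [h1, h2]
  rw [Finset.sum_congr rfl h]
  rw [Finset.sum_add_distrib, Finset.sum_add_distrib, Finset.sum_const,
    Finset.sum_ite_eq' s a (fun _ => A - C), Finset.sum_ite_eq' s b (fun _ => B - C),
    if_pos ha, if_pos hb, nsmul_eq_mul]

lemma pplus_add (A S c : ℝ) (hA : 0 ≤ A) (hS : 0 ≤ S) (hc : 0 ≤ c) :
    max (A - c) 0 + max (S - c) 0 ≤ max (A + S - c) 0 := by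
  rcases le_total (A - c) 0 with h | h
  · rcases le_total (S - c) 0 with h' | h'
    · rw [max_eq_right h, max_eq_right h']
      refine le_trans ?_ (le_max_right _ _); norm_num
    · rw [max_eq_right h, max_eq_left h']
      refine le_trans ?_ (le_max_left _ _); linarith
  · rcases le_total (S - c) 0 with h' | h'
    · rw [max_eq_left h, max_eq_right h']
      refine le_trans ?_ (le_max_left _ _); linarith
    · rw [max_eq_left h, max_eq_left h']
      refine le_trans ?_ (le_max_left _ _); linarith

lemma sum_pplus (s : Finset ℕ) (a : ℕ → ℝ) (c : ℝ) (hc : 0 ≤ c) (ha : ∀ x ∈ s, 0 ≤ a x) :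
    ∑ x ∈ s, max (a x - c) 0 ≤ max ((∑ x ∈ s, a x) - c) 0 := by
  induction s using Finset.cons_induction with
  | empty => simp
  | cons x s hx ih =>
      rw [Finset.sum_cons, Finset.sum_cons]
      have hax : 0 ≤ a x := ha x (Finset.mem_cons_self x s)
      have hs : ∀ y ∈ s, 0 ≤ a y := fun y hy => ha y (Finset.mem_cons.mpr (Or.inr hy))
      calc max (a x - c) 0 + ∑ y ∈ s, max (a y - c) 0
          ≤ max (a x - c) 0 + max ((∑ y ∈ s, a y) - c) 0 := by linarith [ih hs]
        _ ≤ max (a x + (∑ y ∈ s, a y) - c) 0 :=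
            pplus_add (a x) (∑ y ∈ s, a y) c hax (Finset.sum_nonneg hs) hc

lemma conc (s : Finset ℕ) (a : ℕ → ℝ) (c : ℝ) (hc : 0 ≤ c) (ha : ∀ x ∈ s, 0 ≤ a x) :
    ∑ x ∈ s, max (a x) c ≤ (s.card : ℝ) * c + (max (∑ x ∈ s, a x) c - c) := by
  have key : ∀ A : ℝ, max A c = c + max (A - c) 0 := by
    intro A
    rcases le_total A c with h | h
    · rw [max_eq_right h, max_eq_right (by linarith : A - c ≤ 0)]; ring
    · rw [max_eq_left h, max_eq_left (by linarith : (0:ℝ) ≤ A - c)]; ring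
  have h1 : ∀ x ∈ s, max (a x) c = c + max (a x - c) 0 := fun x _ => key (a x)
  rw [Finset.sum_congr rfl h1, Finset.sum_add_distrib, Finset.sum_const, nsmul_eq_mul,
    key (∑ x ∈ s, a x)]
  have := sum_pplus s a c hc ha
  linarith



lemma V_zero (n k : ℕ) : V n k 0 = 1 / n := by rw [V]

lemma V_succ (n k d : ℕ) : V n k (d+1) = (((n - d - 1 : ℕ) : ℝ))⁻¹ *
    ∑ x ∈ Finset.Icc 1 (n - d - 1), max (Q n k (d+1) x) (V n k d) := by rw [V]

lemma Q_succ (n k d x : ℕ) : Q n k (d+1) x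
    = ((x : ℝ) * Q n k d (x+1) + ((n - d - x : ℕ) : ℝ) * Q n k d x) / ((n - d : ℕ) : ℝ) := by
  rw [Q]

lemma Q_zero (n k x : ℕ) : Q n k 0 x = if x = k then 1 else 0 := by rw [Q]

lemma V_one_interior (n k : ℕ) (hn : 3 ≤ n) (hk1 : 1 < k) (hkn : k < n) :
    V n k 1 = (2*(n:ℝ) - 4) / ((n:ℝ) * ((n:ℝ) - 1)) := by
  have hn0 : 0 < n := by omega
  have hnR : (0:ℝ) < (n:ℝ) := by exact_mod_cast hn0
  have hpt : ∀ x ∈ Finset.Icc 1 (n-1), max (Q n k 1 x) (V n k 0)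
      = if x = k-1 then ((k-1:ℕ):ℝ)/n else if x = k then ((n-k:ℕ):ℝ)/n else 1/(n:ℝ) := by
    intro x hx
    rw [V_zero]
    by_cases h1 : x = k - 1
    · subst h1
      have e1 : k - 1 + 1 = k := by omega
      have e2 : ¬ (k - 1 = k) := by omega
      have hQ : Q n k 1 (k-1) = ((k-1:ℕ):ℝ)/n := by
        rw [Q_succ, Q_zero, Q_zero, e1, if_pos rfl, if_neg e2, Nat.sub_zero]
        ring
      have hcast : (1:ℝ) ≤ ((k-1:ℕ):ℝ) := by
        have : 1 ≤ k - 1 := by omega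
        exact_mod_cast this
      rw [hQ, if_pos rfl, max_eq_left (by rw [div_le_div_iff₀ hnR hnR]; nlinarith)]
    · by_cases h2 : x = k
      · have e1 : ¬ (x + 1 = k) := by omega
        have hQ : Q n k 1 x = ((n-k:ℕ):ℝ)/n := by
          rw [Q_succ, Q_zero, Q_zero, if_neg e1, if_pos h2, Nat.sub_zero, h2]
          ring
        have hcast : (1:ℝ) ≤ ((n-k:ℕ):ℝ) := by
          have : 1 ≤ n - k := by omega
          exact_mod_cast this
        rw [hQ, if_neg h1, if_pos h2,
          max_eq_left (by rw [div_le_div_iff₀ hnR hnR]; nlinarith)]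
      · have e1 : ¬ (x + 1 = k) := by omega
        have hQ : Q n k 1 x = 0 := by
          rw [Q_succ, Q_zero, Q_zero, if_neg e1, if_neg h2]
          ring
        rw [hQ, if_neg h1, if_neg h2, max_eq_right (by positivity)]
  rw [V_succ, Nat.sub_zero, Finset.sum_congr rfl hpt]
  rw [sum_if_two (a := k-1) (b := k) (by simp [Finset.mem_Icc]; omega)
    (by simp [Finset.mem_Icc]; omega) (by omega)]
  rw [Nat.card_Icc]
  have c1 : ((n - 1 + 1 - 1 : ℕ) : ℝ) = (n:ℝ) - 1 := by
    have : (n - 1 + 1 - 1 : ℕ) = n - 1 := by omega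
    rw [this]; push_cast [Nat.cast_sub (by omega : 1 ≤ n)]; ring
  have c2 : ((n - 1 : ℕ) : ℝ) = (n:ℝ) - 1 := by
    push_cast [Nat.cast_sub (by omega : 1 ≤ n)]; ring
  have c3 : ((k - 1 : ℕ) : ℝ) = (k:ℝ) - 1 := by
    push_cast [Nat.cast_sub (by omega : 1 ≤ k)]; ring
  have c4 : ((n - k : ℕ) : ℝ) = (n:ℝ) - (k:ℝ) := by
    push_cast [Nat.cast_sub (by omega : k ≤ n)]; ring
  rw [c1, c2, c3, c4]
  have hn1 : (0:ℝ) < (n:ℝ) - 1 := by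
    have : (3:ℝ) ≤ (n:ℝ) := by exact_mod_cast hn
    linarith
  field_simp
  ring

lemma V_one_best (n : ℕ) (hn : 3 ≤ n) :
    V n 1 1 = (2*(n:ℝ) - 3) / ((n:ℝ) * ((n:ℝ) - 1)) := by
  have hn0 : 0 < n := by omega
  have hnR : (0:ℝ) < (n:ℝ) := by exact_mod_cast hn0
  have hpt : ∀ x ∈ Finset.Icc 1 (n-1), max (Q n 1 1 x) (V n 1 0)
      = if x = 1 then ((n-1:ℕ):ℝ)/n else 1/(n:ℝ) := by
    intro x hx
    rw [V_zero, Q_one_eq n (by omega) 1 (by omega) x]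
    by_cases h1 : x = 1
    · subst h1
      have hcast : (1:ℝ) ≤ ((n-1:ℕ):ℝ) := by
        have : 1 ≤ n - 1 := by omega
        exact_mod_cast this
      rw [if_pos rfl, if_pos rfl,
        max_eq_left (by rw [div_le_div_iff₀ hnR hnR]; nlinarith)]
    · rw [if_neg h1, if_neg h1, max_eq_right (by positivity)]
  rw [V_succ, Nat.sub_zero, Finset.sum_congr rfl hpt]
  rw [sum_if_eq_gen (by simp [Finset.mem_Icc]; omega : 1 ∈ Finset.Icc 1 (n-1))]
  rw [Nat.card_Icc]
  have c1 : ((n - 1 + 1 - 1 : ℕ) : ℝ) = (n:ℝ) - 1 := by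
    have : (n - 1 + 1 - 1 : ℕ) = n - 1 := by omega
    rw [this]; push_cast [Nat.cast_sub (by omega : 1 ≤ n)]; ring
  have c2 : ((n - 1 : ℕ) : ℝ) = (n:ℝ) - 1 := by
    push_cast [Nat.cast_sub (by omega : 1 ≤ n)]; ring
  rw [c1, c2]
  have hn1 : (0:ℝ) < (n:ℝ) - 1 := by
    have : (3:ℝ) ≤ (n:ℝ) := by exact_mod_cast hn
    linarith
  field_simp
  ring

lemma V_mono (n k d : ℕ) (hd : d + 1 ≤ n - 1) : V n k d ≤ V n k (d+1) := by
  rw [V_succ]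
  have hm : 1 ≤ n - d - 1 := by omega
  have hmR : (0:ℝ) < ((n - d - 1 : ℕ) : ℝ) := by exact_mod_cast hm
  have h1 : ∑ _x ∈ Finset.Icc 1 (n-d-1), V n k d
      ≤ ∑ x ∈ Finset.Icc 1 (n-d-1), max (Q n k (d+1) x) (V n k d) :=
    Finset.sum_le_sum (fun x _ => le_max_right _ _)
  rw [Finset.sum_const, Nat.card_Icc] at h1
  have e : (n - d - 1 + 1 - 1 : ℕ) = n - d - 1 := by omega
  rw [e, nsmul_eq_mul] at h1
  calc V n k d = (((n-d-1:ℕ):ℝ))⁻¹ * (((n-d-1:ℕ):ℝ) * V n k d) := by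
        field_simp
    _ ≤ _ := by
        apply mul_le_mul_of_nonneg_left h1 (by positivity)

lemma V_step (n k : ℕ) (hk1 : 1 < k) (hkn : k < n) (d : ℕ) (hd2 : d + 1 ≤ n - 2)
    (ih : V n k d < V n 1 d) : V n k (d+1) < V n 1 (d+1) := by
  have hn0 : 0 < n := by omega
  have hm2 : 2 ≤ n - d - 1 := by omega
  set m := n - d - 1 with hm
  have hmR : (0:ℝ) < ((m:ℕ):ℝ) := by
    have : 0 < m := by omega
    exact_mod_cast this
  have hc : 0 ≤ V n k d := V_nonneg n k d
  have hSk : ∑ x ∈ Finset.Icc 1 m, Q n k (d+1) x = ((m:ℕ):ℝ)/n := by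
    have := Q_sum n k (by omega) (by omega) (d+1) (by omega)
    rw [show n - (d+1) = m by omega] at this
    exact this
  -- upper bound for the k side
  have hub : V n k (d+1) ≤ ((m:ℕ):ℝ)⁻¹ *
      ((m:ℝ) * V n k d + (max (((m:ℕ):ℝ)/n) (V n k d) - V n k d)) := by
    rw [V_succ, ← hm]
    apply mul_le_mul_of_nonneg_left _ (by positivity)
    have := conc (Finset.Icc 1 m) (fun x => Q n k (d+1) x) (V n k d) hc
      (fun x _ => Q_nonneg n k (d+1) x)
    rw [Nat.card_Icc, show (m + 1 - 1 : ℕ) = m by omega, hSk] at this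
    exact this
  -- exact value for the 1 side
  have heq : V n 1 (d+1) = ((m:ℕ):ℝ)⁻¹ *
      ((m:ℝ) * V n 1 d + (max (((m:ℕ):ℝ)/n) (V n 1 d) - V n 1 d)) := by
    rw [V_succ, ← hm]
    congr 1
    have hpt : ∀ x ∈ Finset.Icc 1 m, max (Q n 1 (d+1) x) (V n 1 d)
        = if x = 1 then max (((m:ℕ):ℝ)/n) (V n 1 d) else V n 1 d := by
      intro x hx
      rw [Q_one_eq n (by omega) (d+1) (by omega) x]
      by_cases h1 : x = 1
      · subst h1; rw [if_pos rfl, if_pos rfl, show n - (d+1) = m by omega]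
      · rw [if_neg h1, if_neg h1, max_eq_right (V_nonneg n 1 d)]
    rw [Finset.sum_congr rfl hpt,
      sum_if_eq_gen (by simp [Finset.mem_Icc]; omega : 1 ∈ Finset.Icc 1 m)]
    rw [Nat.card_Icc, show (m + 1 - 1 : ℕ) = m by omega]
  rw [heq]
  apply lt_of_le_of_lt hub
  apply mul_lt_mul_of_pos_left _ (by positivity)
  have hmax : max (((m:ℕ):ℝ)/n) (V n k d) ≤ max (((m:ℕ):ℝ)/n) (V n 1 d) :=
    max_le_max le_rfl ih.le
  have hmcast : (2:ℝ) ≤ ((m:ℕ):ℝ) := by exact_mod_cast hm2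
  nlinarith [hmax, ih]

lemma V_top_eq (n : ℕ) (hn : 1 ≤ n) : ∀ d, d ≤ n - 1 → V n n d = V n 1 d := by
  intro d
  induction d with
  | zero => intro _; rw [V_zero, V_zero]
  | succ d ih =>
      intro hd
      have hdn : d ≤ n - 1 := by omega
      have hm1 : 1 ≤ n - d - 1 := by omega
      set m := n - d - 1 with hm
      rw [V_succ, V_succ, ih hdn, ← hm]
      congr 1
      have hptn : ∀ x ∈ Finset.Icc 1 m, max (Q n n (d+1) x) (V n 1 d)
          = if x = m then max (((m:ℕ):ℝ)/n) (V n 1 d) else V n 1 d := by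
        intro x hx
        rw [Q_top_eq n (by omega) (d+1) (by omega) x, show n - (d+1) = m by omega]
        by_cases h1 : x = m
        · subst h1; rw [if_pos rfl, if_pos rfl]
        · rw [if_neg h1, if_neg h1, max_eq_right (V_nonneg n 1 d)]
      have hpt1 : ∀ x ∈ Finset.Icc 1 m, max (Q n 1 (d+1) x) (V n 1 d)
          = if x = 1 then max (((m:ℕ):ℝ)/n) (V n 1 d) else V n 1 d := by
        intro x hx
        rw [Q_one_eq n (by omega) (d+1) (by omega) x, show n - (d+1) = m by omega]
        by_cases h1 : x = 1
        · subst h1; rw [if_pos rfl, if_pos rfl]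
        · rw [if_neg h1, if_neg h1, max_eq_right (V_nonneg n 1 d)]
      rw [Finset.sum_congr rfl hptn, Finset.sum_congr rfl hpt1]
      rw [sum_if_eq_gen (by simp [Finset.mem_Icc]; omega : m ∈ Finset.Icc 1 m),
        sum_if_eq_gen (by simp [Finset.mem_Icc]; omega : 1 ∈ Finset.Icc 1 m)]

lemma V_final (n k : ℕ) (hn : 3 ≤ n) (hk1 : 1 < k) (hkn : k < n) :
    V n k (n-1) < V n 1 (n-1) := by
  have hn0 : 0 < n := by omega
  have hnR : (0:ℝ) < (n:ℝ) := by exact_mod_cast hn0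
  have hn3 : (3:ℝ) ≤ (n:ℝ) := by exact_mod_cast hn
  have hden : (0:ℝ) < (n:ℝ) * ((n:ℝ) - 1) := by nlinarith
  have base : V n k 1 < V n 1 1 := by
    rw [V_one_interior n k hn hk1 hkn, V_one_best n hn, div_lt_div_iff₀ hden hden]
    nlinarith
  have chain : ∀ j, 1 + j ≤ n - 2 → V n k (1+j) < V n 1 (1+j) := by
    intro j
    induction j with
    | zero => intro _; simpa using base
    | succ j ih =>
        intro hj
        rw [show 1 + (j+1) = (1+j) + 1 by omega]
        exact V_step n k hk1 hkn (1+j) (by omega) (ih (by omega))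
  have hkn2 : V n k (n-2) < V n 1 (n-2) := by
    rw [show n - 2 = 1 + (n - 3) by omega]
    exact chain (n-3) (by omega)
  have mono1 : ∀ j, 1 + j ≤ n - 2 → V n 1 1 ≤ V n 1 (1 + j) := by
    intro j
    induction j with
    | zero => intro _; simp
    | succ j ih =>
        intro hj
        rw [show 1 + (j+1) = (1+j) + 1 by omega]
        exact le_trans (ih (by omega)) (V_mono n 1 (1+j) (by omega))
  have h1n : 1/(n:ℝ) < V n 1 (n-2) := by
    have hv1 : 1/(n:ℝ) < V n 1 1 := by
      rw [V_one_best n hn, div_lt_div_iff₀ hnR hden]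
      nlinarith
    have hle : V n 1 1 ≤ V n 1 (n-2) := by
      rw [show n - 2 = 1 + (n-3) by omega]
      exact mono1 (n-3) (by omega)
    linarith
  have hstage : ∀ k', 1 ≤ k' → k' ≤ n → V n k' (n-1) = max (1/(n:ℝ)) (V n k' (n-2)) := by
    intro k' h1 h2
    have hQ : Q n k' ((n-2)+1) 1 = 1/(n:ℝ) := by
      have h := Q_sum n k' h1 h2 (n-1) (le_refl _)
      rw [show n - (n-1) = 1 by omega, Finset.Icc_self, Finset.sum_singleton,
        show n - 1 = (n-2)+1 by omega] at h
      rw [h]; norm_num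
    rw [show n - 1 = (n-2) + 1 by omega, V_succ,
      show n - (n-2) - 1 = 1 by omega, Finset.Icc_self, Finset.sum_singleton, hQ]
    simp
  rw [hstage k (by omega) (by omega), hstage 1 (by omega) (by omega),
    max_eq_right h1n.le]
  exact max_lt h1n hkn2


/-! ### class lemmas -/

lemma mem_cls {n : ℕ} {t : ℕ} {c0 c : Code n} :
    c ∈ cls t c0 ↔ ∀ i : Fin n, (i:ℕ) < t → c i = c0 i := by
  simp [cls]

lemma self_mem_cls {n : ℕ} (t : ℕ) (c0 : Code n) : c0 ∈ cls t c0 :=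
  mem_cls.mpr (fun _ _ => rfl)

lemma cls_of_ge {n : ℕ} {t : ℕ} (h : n ≤ t) (c0 : Code n) : cls t c0 = {c0} := by
  ext c
  rw [mem_cls, Finset.mem_singleton]
  constructor
  · intro h'
    funext i
    exact h' i (lt_of_lt_of_le i.isLt h)
  · rintro rfl _ _
    rfl

lemma cls_filter_eq {n : ℕ} {t : ℕ} (ht : t < n) (c0 : Code n) (y : Fin (t+1)) :
    (cls t c0).filter (fun c => c ⟨t, ht⟩ = y)
      = cls (t+1) (Function.update c0 ⟨t, ht⟩ y) := by
  ext c
  rw [Finset.mem_filter, mem_cls, mem_cls]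
  constructor
  · rintro ⟨hpre, hy⟩ i hi
    by_cases hit : i = ⟨t, ht⟩
    · subst hit
      rw [Function.update_self]
      exact hy
    · rw [Function.update_of_ne hit]
      have : (i:ℕ) ≠ t := fun h' => hit (Fin.ext h')
      exact hpre i (by omega)
  · intro h
    constructor
    · intro i hi
      have hit : i ≠ ⟨t, ht⟩ := fun h' => by
        rw [h'] at hi
        exact absurd hi (by simp)
      have := h i (by omega)
      rwa [Function.update_of_ne hit] at this
    · have := h ⟨t, ht⟩ (by simp)
      rwa [Function.update_self] at this

lemma cls_split {n : ℕ} {t : ℕ} (ht : t < n) (c0 : Code n) {M : Type*} [AddCommMonoid M]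
    (f : Code n → M) :
    ∑ c ∈ cls t c0, f c
      = ∑ y : Fin (t+1), ∑ c ∈ cls (t+1) (Function.update c0 ⟨t, ht⟩ y), f c := by
  rw [← Finset.sum_fiberwise_of_maps_to
    (g := fun c : Code n => c ⟨t, ht⟩) (t := Finset.univ) (fun c _ => Finset.mem_univ _) f]
  apply Finset.sum_congr rfl
  intro y _
  rw [cls_filter_eq ht c0 y]

lemma cls_card {n : ℕ} : ∀ m t, n ≤ t + m → ∀ c0 : Code n, (cls t c0).card = Nt n t := by
  intro m
  induction m with
  | zero =>
      intro t ht c0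
      rw [cls_of_ge (by omega), Finset.card_singleton, Nt_of_ge (by omega)]
  | succ m ih =>
      intro t ht c0
      by_cases h : n ≤ t
      · rw [cls_of_ge h, Finset.card_singleton, Nt_of_ge h]
      · push_neg at h
        have h1 : (cls t c0).card = ∑ y : Fin (t+1), (cls (t+1) (Function.update c0 ⟨t,h⟩ y)).card := by
          rw [Finset.card_eq_sum_ones, cls_split h c0 (fun _ => (1:ℕ))]
          apply Finset.sum_congr rfl
          intro y _
          rw [Finset.card_eq_sum_ones]
        rw [h1, Finset.sum_congr rfl (fun y _ => ih (t+1) (by omega) _), Finset.sum_const,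
          Finset.card_univ, Fintype.card_fin, smul_eq_mul, Nt_step h]

lemma evo_congr (g g' : ℕ → ℕ) : ∀ f t r, (∀ s, t < s → s ≤ t + f → g s = g' s) →
    evo g f t r = evo g' f t r := by
  intro f
  induction f with
  | zero => intros; rw [evo, evo]
  | succ f ih =>
      intro t r h
      rw [evo, evo, h (t+1) (by omega) (by omega)]
      exact ih (t+1) _ (fun s hs hs2 => h s (by omega) (by omega))

lemma sum_fin_split (m r : ℕ) (hr : r ≤ m) (A B : ℝ) :
    ∑ y : Fin m, (if (y:ℕ) + 1 ≤ r then A else B) = r * A + ((m - r : ℕ):ℝ) * B := by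
  rw [Fin.sum_univ_eq_sum_range (fun y => if y + 1 ≤ r then A else B) m]
  rw [Finset.range_eq_Ico, ← Finset.sum_Ico_consecutive _ (Nat.zero_le r) hr]
  have h1 : ∀ y ∈ Finset.Ico 0 r, (if y + 1 ≤ r then A else B) = A := by
    intro y hy
    rw [Finset.mem_Ico] at hy
    rw [if_pos (by omega)]
  have h2 : ∀ y ∈ Finset.Ico r m, (if y + 1 ≤ r then A else B) = B := by
    intro y hy
    rw [Finset.mem_Ico] at hy
    rw [if_neg (by omega)]
  rw [Finset.sum_congr rfl h1, Finset.sum_congr rfl h2, Finset.sum_const, Finset.sum_const,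
    Nat.card_Ico, Nat.card_Ico, Nat.sub_zero, nsmul_eq_mul, nsmul_eq_mul]

lemma count_lemma {n : ℕ} (k : ℕ) : ∀ f t, t + f = n - 1 → t < n → ∀ r, 1 ≤ r → r ≤ t + 1 →
    ∀ c0 : Code n, (∑ c ∈ cls (t+1) c0, if evo (cv c) f t r = k then (1:ℝ) else 0)
      = (Nt n (t+1) : ℝ) * Q n k f r := by
  intro f
  induction f with
  | zero =>
      intro t ht htn r hr1 hr2 c0
      rw [cls_of_ge (by omega), Finset.sum_singleton, Nt_of_ge (by omega), Q_zero]
      rw [evo]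
      simp
  | succ f ih =>
      intro t ht htn r hr1 hr2 c0
      have ht1 : t + 1 < n := by omega
      rw [cls_split ht1 c0]
      have inner : ∀ y : Fin (t+1+1), (∑ c ∈ cls (t+1+1) (Function.update c0 ⟨t+1, ht1⟩ y),
          if evo (cv c) (f+1) t r = k then (1:ℝ) else 0)
          = (Nt n (t+2) : ℝ) * Q n k f (if (y:ℕ) + 1 ≤ r then r + 1 else r) := by
        intro y
        have step : ∀ c ∈ cls (t+1+1) (Function.update c0 ⟨t+1,ht1⟩ y),
            (if evo (cv c) (f+1) t r = k then (1:ℝ) else 0)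
            = (if evo (cv c) f (t+1) (if (y:ℕ)+1 ≤ r then r+1 else r) = k then (1:ℝ) else 0) := by
          intro c hc
          have hcv : cv c (t+1) = (y:ℕ) + 1 := by
            rw [cv, dif_pos ht1]
            rw [mem_cls] at hc
            rw [hc ⟨t+1, ht1⟩ (by simp), Function.update_self]
          rw [evo, hcv]
        rw [Finset.sum_congr rfl step]
        exact ih (t+1) (by omega) ht1 _ (by split <;> omega) (by split <;> omega) _
      rw [Finset.sum_congr rfl (fun y _ => inner y)]
      have hsum : ∑ y : Fin (t+1+1), (Nt n (t+2) : ℝ) * Q n k f (if (y:ℕ) + 1 ≤ r then r + 1 else r)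
          = (Nt n (t+2) : ℝ) * ((r:ℝ) * Q n k f (r+1) + ((t+2-r : ℕ):ℝ) * Q n k f r) := by
        rw [← Finset.mul_sum]
        congr 1
        have : ∀ y : Fin (t+1+1), Q n k f (if (y:ℕ) + 1 ≤ r then r + 1 else r)
            = if (y:ℕ) + 1 ≤ r then Q n k f (r+1) else Q n k f r := by
          intro y; split <;> rfl
        rw [Finset.sum_congr rfl (fun y _ => this y)]
        exact sum_fin_split (t+2) r (by omega) _ _
      rw [hsum, Q_succ]
      have e1 : (n - f : ℕ) = t + 2 := by omega
      have e2 : (n - f - r : ℕ) = t + 2 - r := by omega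
      rw [e2, e1, Nt_step ht1]
      have : ((t+2 : ℕ):ℝ) ≠ 0 := by positivity
      push_cast
      field_simp
      ring

/-! ### payoff basics -/

lemma payoff_nonneg (n k : ℕ) (c : Code n) (j : ℕ) : 0 ≤ payoff n k c j := by
  rw [payoff]; positivity

lemma fin_sum_shift (m' : ℕ) (g : ℕ → ℝ) :
    ∑ y : Fin m', g ((y:ℕ)+1) = ∑ x ∈ Finset.Icc 1 m', g x := by
  rw [Fin.sum_univ_eq_sum_range (fun i => g (i+1)) m',
    show Finset.Icc 1 m' = Finset.Ico 1 (m'+1) by rw [Finset.Ico_add_one_right_eq_Icc],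
    Finset.sum_Ico_eq_sum_range, show m' + 1 - 1 = m' by omega]
  exact Finset.sum_congr rfl (fun i _ => by rw [add_comm])

lemma sum_last {n : ℕ} (k : ℕ) (hn : 1 ≤ n) (hk1 : 1 ≤ k) (hk2 : k ≤ n) (c0 : Code n) :
    ∑ c ∈ cls (n-1) c0, payoff n k c (n-1) = (Nt n (n-1) : ℝ) * V n k 0 := by
  have ht : n - 1 < n := by omega
  rw [cls_split ht c0]
  have inner : ∀ y : Fin (n-1+1),
      (∑ c ∈ cls (n-1+1) (Function.update c0 ⟨n-1,ht⟩ y), payoff n k c (n-1))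
      = if (y:ℕ) + 1 = k then (1:ℝ) else 0 := by
    intro y
    rw [cls_of_ge (by omega), Finset.sum_singleton, payoff,
      show n - 1 - (n-1) = 0 by omega, evo]
    have hcv : cv (Function.update c0 ⟨n-1,ht⟩ y) (n-1) = (y:ℕ)+1 := by
      rw [cv, dif_pos ht, Function.update_self]
    rw [hcv]
  rw [Finset.sum_congr rfl (fun y _ => inner y)]
  have hiff : ∀ y : Fin (n-1+1), ((y:ℕ)+1 = k) ↔ y = (⟨k-1, by omega⟩ : Fin (n-1+1)) := by
    intro y
    rw [Fin.ext_iff]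
    simp only [Fin.val_mk]
    omega
  rw [Finset.sum_congr rfl (fun y _ => by rw [if_congr (hiff y) rfl rfl])]
  rw [Finset.sum_ite_eq' Finset.univ _ (fun _ => (1:ℝ)), if_pos (Finset.mem_univ _)]
  rw [V_zero, show Nt n (n-1) = n by rw [Nt_step (by omega), Nt_of_ge (by omega)]; omega]
  have : ((n:ℕ):ℝ) ≠ 0 := by
    have : 0 < n := hn
    positivity
  field_simp

lemma adapt_mod {n : ℕ} (τ : Code n → Fin n) (hA : Adapted τ) (t : ℕ) (ht1 : t + 1 < n) :
    Adapted (fun c => if t < (τ c : ℕ) then τ c else ⟨t+1, ht1⟩) := by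
  intro c c' hag
  simp only at hag ⊢
  have hag' : ∀ i, i ≤ τ c → c i = c' i := by
    intro i hi
    apply hag
    by_cases h : t < (τ c : ℕ)
    · rwa [if_pos h]
    · rw [if_neg h]
      rw [Fin.le_def] at hi ⊢
      simp only [Fin.val_mk]
      omega
  have heq : τ c' = τ c := hA c c' hag'
  rw [heq]

/-! ### upper bound for any adapted rule -/

lemma U_bound {n : ℕ} (k : ℕ) (hk1 : 1 ≤ k) (hk2 : k ≤ n) :
    ∀ m, 1 ≤ m → m ≤ n → ∀ τ : Code n → Fin n, Adapted τ →
    (∀ c, n - m ≤ (τ c : ℕ)) → ∀ c0 : Code n,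
    (∑ c ∈ cls (n - m) c0, payoff n k c (τ c)) ≤ (Nt n (n-m) : ℝ) * V n k (m-1) := by
  intro m
  induction m with
  | zero => omega
  | succ m ih =>
      intro _ hmn τ hA hge c0
      by_cases hm : m = 0
      · -- base case : everyone stops at the last stage
        subst hm
        have hlast : ∀ c : Code n, ((τ c : ℕ)) = n - 1 := by
          intro c
          have := hge c
          have := (τ c).isLt
          omega
        have : ∀ c ∈ cls (n-1) c0, payoff n k c (τ c) = payoff n k c (n-1) := by
          intro c _
          rw [hlast c]
        rw [Finset.sum_congr rfl this, sum_last k (by omega) hk1 hk2 c0]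
      · -- inductive step
        have hm1 : 1 ≤ m := by omega
        set t := n - (m+1) with hts
        have ht : t < n := by omega
        have ht1 : t + 1 < n := by omega
        have htm : t + 1 = n - m := by omega
        rw [cls_split ht c0]
        have key : ∀ y : Fin (t+1),
            (∑ c ∈ cls (t+1) (Function.update c0 ⟨t,ht⟩ y), payoff n k c (τ c))
            ≤ (Nt n (t+1) : ℝ) * max (Q n k (n-1-t) ((y:ℕ)+1)) (V n k (m-1)) := by
          intro y
          set uy := Function.update c0 ⟨t,ht⟩ y with huy
          by_cases hstop : τ uy = ⟨t, ht⟩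
          · -- the rule stops at stage t on this subclass
            have hall : ∀ c ∈ cls (t+1) uy, τ c = ⟨t, ht⟩ := by
              intro c hc
              rw [← hstop]
              apply hA uy c
              intro i hi
              rw [mem_cls] at hc
              rw [hstop, Fin.le_def] at hi
              simp only [Fin.val_mk] at hi
              exact (hc i (by omega)).symm
            have hcv : ∀ c ∈ cls (t+1) uy, cv c t = (y:ℕ)+1 := by
              intro c hc
              rw [mem_cls] at hc
              rw [cv, dif_pos ht, hc ⟨t, ht⟩ (by simp), huy, Function.update_self]
            have : ∀ c ∈ cls (t+1) uy, payoff n k c (τ c)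
                = if evo (cv c) (n-1-t) t ((y:ℕ)+1) = k then (1:ℝ) else 0 := by
              intro c hc
              rw [hall c hc, payoff]
              simp only [Fin.val_mk]
              rw [hcv c hc]
            rw [Finset.sum_congr rfl this,
              count_lemma k (n-1-t) t (by omega) ht ((y:ℕ)+1) (by omega) (by omega) uy]
            apply mul_le_mul_of_nonneg_left (le_max_left _ _) (by positivity)
          · -- the rule continues on this subclass
            have hgo : ∀ c ∈ cls (t+1) uy, t < (τ c : ℕ) := by
              intro c hc
              have hne : τ c ≠ ⟨t, ht⟩ := by
                intro hceq
                apply hstop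
                rw [← hceq]
                apply hA c uy
                intro i hi
                rw [mem_cls] at hc
                rw [hceq, Fin.le_def] at hi
                simp only [Fin.val_mk] at hi
                exact hc i (by omega)
              have h1 := hge c
              have : (τ c : ℕ) ≠ t := fun h => hne (Fin.ext h)
              omega
            set τ' : Code n → Fin n := fun c => if t < (τ c : ℕ) then τ c else ⟨t+1, ht1⟩
              with hτ'
            have hA' : Adapted τ' := adapt_mod τ hA t ht1
            have hge' : ∀ c, n - m ≤ (τ' c : ℕ) := by
              intro c
              rw [hτ']
              simp only
              by_cases h : t < (τ c : ℕ)
              · rw [if_pos h]; omega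
              · rw [if_neg h]; simp only [Fin.val_mk]; omega
            have hsame : ∀ c ∈ cls (t+1) uy, payoff n k c (τ c) = payoff n k c (τ' c) := by
              intro c hc
              rw [hτ']
              simp only
              rw [if_pos (hgo c hc)]
            rw [Finset.sum_congr rfl hsame]
            have := ih hm1 (by omega) τ' hA' hge' uy
            rw [← htm] at this
            calc (∑ c ∈ cls (t+1) uy, payoff n k c (τ' c))
                ≤ (Nt n (t+1) : ℝ) * V n k (m-1) := this
              _ ≤ _ := mul_le_mul_of_nonneg_left (le_max_right _ _) (by positivity)
        calc ∑ y : Fin (t+1), (∑ c ∈ cls (t+1) (Function.update c0 ⟨t,ht⟩ y), payoff n k c (τ c))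
            ≤ ∑ y : Fin (t+1), (Nt n (t+1) : ℝ) * max (Q n k (n-1-t) ((y:ℕ)+1)) (V n k (m-1)) :=
              Finset.sum_le_sum (fun y _ => key y)
          _ = (Nt n (n-(m+1)) : ℝ) * V n k (m+1-1) := by
              rw [← Finset.mul_sum,
                fin_sum_shift (t+1) (fun x => max (Q n k (n-1-t) x) (V n k (m-1)))]
              have hnm : n - 1 - t = m := by omega
              have hv : V n k m = (((t+1:ℕ)):ℝ)⁻¹ *
                  ∑ x ∈ Finset.Icc 1 (t+1), max (Q n k m x) (V n k (m-1)) := by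
                rw [show m = (m-1)+1 by omega, V_succ,
                  show n - (m-1) - 1 = t + 1 by omega, show m - 1 + 1 = m by omega]
              rw [hnm, show m + 1 - 1 = m by omega, ← hts, Nt_step ht, hv]
              have : ((t+1:ℕ):ℝ) ≠ 0 := by positivity
              push_cast
              field_simp

/-! ### the greedy (optimal) rule -/

noncomputable def gstop (n k : ℕ) (c : Code n) : Finset (Fin n) :=
  Finset.univ.filter (fun t : Fin n =>
    n ≤ (t:ℕ)+1 ∨ V n k (n-(t:ℕ)-2) ≤ Q n k (n-1-(t:ℕ)) (cv c (t:ℕ)))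

lemma gstop_nonempty (n k : ℕ) (hn : 1 ≤ n) (c : Code n) : (gstop n k c).Nonempty := by
  refine ⟨⟨n-1, by omega⟩, ?_⟩
  rw [gstop, Finset.mem_filter]
  exact ⟨Finset.mem_univ _, Or.inl (by simp only [Fin.val_mk]; omega)⟩

noncomputable def greedy (n k : ℕ) (hn : 1 ≤ n) (c : Code n) : Fin n :=
  (gstop n k c).min' (gstop_nonempty n k hn c)

lemma mem_gstop_iff {n k : ℕ} {c : Code n} {t : Fin n} :
    t ∈ gstop n k c ↔ (n ≤ (t:ℕ)+1 ∨ V n k (n-(t:ℕ)-2) ≤ Q n k (n-1-(t:ℕ)) (cv c (t:ℕ))) := by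
  rw [gstop, Finset.mem_filter]
  simp

lemma gstop_congr {n k : ℕ} {c c' : Code n} {t : Fin n}
    (h : ∀ i : Fin n, i ≤ t → c i = c' i) {s : Fin n} (hs : s ≤ t) :
    (s ∈ gstop n k c ↔ s ∈ gstop n k c') := by
  rw [mem_gstop_iff, mem_gstop_iff]
  have hcv : cv c (s:ℕ) = cv c' (s:ℕ) := by
    rw [cv, cv, dif_pos s.isLt, dif_pos s.isLt]
    have : c ⟨(s:ℕ), s.isLt⟩ = c' ⟨(s:ℕ), s.isLt⟩ := by
      have : (⟨(s:ℕ), s.isLt⟩ : Fin n) = s := by rw [Fin.ext_iff]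
      rw [this]
      exact h s hs
    rw [this]
  rw [hcv]

lemma greedy_adapted (n k : ℕ) (hn : 1 ≤ n) : Adapted (greedy n k hn) := by
  intro c c' hag
  apply le_antisymm
  · apply Finset.min'_le
    rw [← gstop_congr hag (le_refl (greedy n k hn c))]
    exact Finset.min'_mem _ _
  · apply Finset.le_min'
    intro s hs
    by_contra hlt
    push_neg at hlt
    rw [← gstop_congr hag hlt.le] at hs
    exact absurd (Finset.min'_le _ _ hs) (not_le.mpr hlt)

lemma greedy_mem (n k : ℕ) (hn : 1 ≤ n) (c : Code n) :
    greedy n k hn c ∈ gstop n k c := Finset.min'_mem _ _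

lemma greedy_min (n k : ℕ) (hn : 1 ≤ n) (c : Code n) {s : Fin n} (hs : s ∈ gstop n k c) :
    greedy n k hn c ≤ s := Finset.min'_le _ _ hs

/-! ### exact value of the greedy rule -/

lemma E_eq {n : ℕ} (k : ℕ) (hn : 1 ≤ n) (hk1 : 1 ≤ k) (hk2 : k ≤ n) :
    ∀ m, 1 ≤ m → m ≤ n → ∀ c0 : Code n,
    (∀ c ∈ cls (n - m) c0, n - m ≤ (greedy n k hn c : ℕ)) →
    (∑ c ∈ cls (n - m) c0, payoff n k c (greedy n k hn c))
      = (Nt n (n-m) : ℝ) * V n k (m-1) := by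
  intro m
  induction m with
  | zero => omega
  | succ m ih =>
      intro _ hmn c0 hge
      by_cases hm : m = 0
      · subst hm
        have hlast : ∀ c ∈ cls (n-1) c0, ((greedy n k hn c : ℕ)) = n - 1 := by
          intro c hc
          have := hge c hc
          have := (greedy n k hn c).isLt
          omega
        have : ∀ c ∈ cls (n-1) c0, payoff n k c (greedy n k hn c) = payoff n k c (n-1) := by
          intro c hc
          rw [hlast c hc]
        rw [Finset.sum_congr rfl this, sum_last k (by omega) hk1 hk2 c0]
      · have hm1 : 1 ≤ m := by omega
        set t := n - (m+1) with hts
        have ht : t < n := by omega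
        have ht1 : t + 1 < n := by omega
        have htm : t + 1 = n - m := by omega
        rw [cls_split ht c0]
        have hsub : ∀ y : Fin (t+1), ∀ c ∈ cls (t+1) (Function.update c0 ⟨t,ht⟩ y),
            c ∈ cls t c0 := by
          intro y c hc
          rw [mem_cls] at hc ⊢
          intro i hi
          have := hc i (by omega)
          rw [this, Function.update_of_ne (fun h' => by rw [h'] at hi; simp at hi)]
        have hgey : ∀ y : Fin (t+1), ∀ c ∈ cls (t+1) (Function.update c0 ⟨t,ht⟩ y),
            t ≤ (greedy n k hn c : ℕ) := by
          intro y c hc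
          have := hge c (hsub y c hc)
          omega
        have key : ∀ y : Fin (t+1),
            (∑ c ∈ cls (t+1) (Function.update c0 ⟨t,ht⟩ y), payoff n k c (greedy n k hn c))
            = (Nt n (t+1) : ℝ) * max (Q n k (n-1-t) ((y:ℕ)+1)) (V n k (m-1)) := by
          intro y
          set uy := Function.update c0 ⟨t,ht⟩ y with huy
          have hcv : ∀ c ∈ cls (t+1) uy, cv c t = (y:ℕ)+1 := by
            intro c hc
            rw [mem_cls] at hc
            rw [cv, dif_pos ht, hc ⟨t, ht⟩ (by simp), huy, Function.update_self]
          by_cases hQ : V n k (m-1) ≤ Q n k (n-1-t) ((y:ℕ)+1)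
          · -- the greedy rule stops at stage t on this subclass
            have hstop : ∀ c ∈ cls (t+1) uy, greedy n k hn c = ⟨t, ht⟩ := by
              intro c hc
              have hmem : (⟨t,ht⟩ : Fin n) ∈ gstop n k c := by
                rw [mem_gstop_iff]
                right
                simp only [Fin.val_mk]
                rw [hcv c hc, show n - t - 2 = m - 1 by omega]
                exact hQ
              have h1 := greedy_min n k hn c hmem
              have h2 := hgey y c hc
              rw [Fin.le_def] at h1
              simp only [Fin.val_mk] at h1
              rw [Fin.ext_iff]
              simp only [Fin.val_mk]
              omega
            have heq : ∀ c ∈ cls (t+1) uy, payoff n k c (greedy n k hn c)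
                = if evo (cv c) (n-1-t) t ((y:ℕ)+1) = k then (1:ℝ) else 0 := by
              intro c hc
              rw [hstop c hc, payoff]
              simp only [Fin.val_mk]
              rw [hcv c hc]
            rw [Finset.sum_congr rfl heq,
              count_lemma k (n-1-t) t (by omega) ht ((y:ℕ)+1) (by omega) (by omega) uy,
              max_eq_left hQ]
          · -- the greedy rule continues on this subclass
            push_neg at hQ
            have hgo : ∀ c ∈ cls (t+1) uy, t + 1 ≤ (greedy n k hn c : ℕ) := by
              intro c hc
              have h2 := hgey y c hc
              have hne : ((greedy n k hn c : ℕ)) ≠ t := by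
                intro hjeq
                have hmem := greedy_mem n k hn c
                rw [show greedy n k hn c = ⟨t, ht⟩ from Fin.ext hjeq] at hmem
                rw [mem_gstop_iff] at hmem
                simp only [Fin.val_mk] at hmem
                rcases hmem with h | h
                · omega
                · rw [hcv c hc, show n - t - 2 = m - 1 by omega] at h
                  exact absurd h (not_le.mpr hQ)
              omega
            have hih := ih hm1 (by omega) uy (by
              rw [← htm]
              exact fun c hc => hgo c hc)
            rw [show cls (t+1) uy = cls (n-m) uy by rw [htm], hih, max_eq_right hQ.le, ← htm]
        rw [Finset.sum_congr rfl (fun y _ => key y)]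
        rw [← Finset.mul_sum, fin_sum_shift (t+1) (fun x => max (Q n k (n-1-t) x) (V n k (m-1)))]
        have hnm : n - 1 - t = m := by omega
        have hv : V n k m = (((t+1:ℕ)):ℝ)⁻¹ *
            ∑ x ∈ Finset.Icc 1 (t+1), max (Q n k m x) (V n k (m-1)) := by
          rw [show m = (m-1)+1 by omega, V_succ, show n - (m-1) - 1 = t + 1 by omega,
            show m - 1 + 1 = m by omega]
        rw [hnm, show m + 1 - 1 = m by omega, Nt_step ht, hv]
        have : ((t+1:ℕ):ℝ) ≠ 0 := by positivity
        push_cast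
        field_simp
        
/-! ### top-level corollaries -/

lemma cls_zero {n : ℕ} (c0 : Code n) : cls 0 c0 = Finset.univ := by
  ext c; simp [cls]

lemma U_top {n : ℕ} (k : ℕ) (hn : 1 ≤ n) (hk1 : 1 ≤ k) (hk2 : k ≤ n)
    (τ : Code n → Fin n) (hA : Adapted τ) :
    (∑ c : Code n, payoff n k c (τ c)) ≤ (n.factorial : ℝ) * V n k (n-1) := by
  have h := U_bound k hk1 hk2 n (by omega) le_rfl τ hA (fun c => by omega) default
  rw [show n - n = 0 by omega, cls_zero, Nt_zero] at h
  exact h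

lemma E_top {n : ℕ} (k : ℕ) (hn : 1 ≤ n) (hk1 : 1 ≤ k) (hk2 : k ≤ n) :
    (∑ c : Code n, payoff n k c (greedy n k hn c)) = (n.factorial : ℝ) * V n k (n-1) := by
  have h := E_eq k hn hk1 hk2 n (by omega) le_rfl default (fun c _ => by omega)
  rw [show n - n = 0 by omega, cls_zero, Nt_zero] at h
  exact h

/-! ### the bijection between permutations and codes -/

lemma relRank_pos {n : ℕ} (σ : Equiv.Perm (Fin n)) (t : Fin n) : 1 ≤ relRank σ t := by
  rw [relRank, Nat.succ_le_iff, Finset.card_pos]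
  exact ⟨t, by simp⟩

lemma relRank_le {n : ℕ} (σ : Equiv.Perm (Fin n)) (t : Fin n) : relRank σ t ≤ (t:ℕ) + 1 := by
  rw [relRank]
  calc (Finset.univ.filter fun i : Fin n => i ≤ t ∧ σ i ≤ σ t).card
      ≤ (Finset.univ.filter fun i : Fin n => i ≤ t).card := by
        apply Finset.card_le_card
        intro i hi
        rw [Finset.mem_filter] at hi ⊢
        exact ⟨hi.1, hi.2.1⟩
    _ = (t:ℕ) + 1 := by
        rw [show (Finset.univ.filter fun i : Fin n => i ≤ t) = Finset.Iic t by ext i; simp,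
          Fin.card_Iic]

def relcode {n : ℕ} (σ : Equiv.Perm (Fin n)) : Code n :=
  fun t => ⟨relRank σ t - 1, by
    have h1 := relRank_pos σ t
    have h2 := relRank_le σ t
    omega⟩

lemma cv_relcode {n : ℕ} (σ : Equiv.Perm (Fin n)) {s : ℕ} (hs : s < n) :
    cv (relcode σ) s = relRank σ ⟨s, hs⟩ := by
  rw [cv, dif_pos hs, relcode]
  have := relRank_pos σ ⟨s, hs⟩
  simp only [Fin.val_mk]
  omega

def pr {n : ℕ} (σ : Equiv.Perm (Fin n)) (j s : Fin n) : ℕ :=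
  (Finset.univ.filter fun i => i ≤ s ∧ σ i ≤ σ j).card

lemma pr_self {n : ℕ} (σ : Equiv.Perm (Fin n)) (j : Fin n) : pr σ j j = relRank σ j := rfl

lemma pr_last {n : ℕ} (σ : Equiv.Perm (Fin n)) (j s : Fin n) (hs : (s:ℕ) = n - 1) :
    pr σ j s = (σ j : ℕ) + 1 := by
  rw [pr]
  have h1 : (Finset.univ.filter fun i : Fin n => i ≤ s ∧ σ i ≤ σ j)
      = Finset.univ.filter fun i : Fin n => σ i ≤ σ j := by
    apply Finset.filter_congr
    intro i _
    have hle : i ≤ s := by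
      rw [Fin.le_def, hs]
      have := i.isLt
      omega
    simp [hle]
  rw [h1]
  have h2 : (Finset.univ.filter fun i : Fin n => σ i ≤ σ j).card
      = (Finset.univ.filter fun v : Fin n => v ≤ σ j).card := by
    apply Finset.card_bij (fun i _ => σ i)
    · intro a ha
      rw [Finset.mem_filter] at ha ⊢
      exact ⟨Finset.mem_univ _, ha.2⟩
    · intro a _ b _ hab
      exact σ.injective hab
    · intro v hv
      rw [Finset.mem_filter] at hv
      refine ⟨σ.symm v, ?_, Equiv.apply_symm_apply σ v⟩
      rw [Finset.mem_filter, Equiv.apply_symm_apply]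
      exact ⟨Finset.mem_univ _, hv.2⟩
  rw [h2, show (Finset.univ.filter fun v : Fin n => v ≤ σ j) = Finset.Iic (σ j) by ext v; simp,
    Fin.card_Iic]

lemma relRank_lt_iff {n : ℕ} (σ : Equiv.Perm (Fin n)) {j s s' : Fin n}
    (hjs : j ≤ s) (hss' : (s':ℕ) = (s:ℕ)+1) :
    (σ s' < σ j ↔ relRank σ s' ≤ pr σ j s) := by
  classical
  set B := Finset.univ.filter fun i : Fin n => i ≤ s ∧ σ i < σ s' with hB
  set A := Finset.univ.filter fun i : Fin n => i ≤ s ∧ σ i ≤ σ j with hA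
  have hsne : ∀ i : Fin n, i ≤ s → i ≠ s' := by
    intro i hi h
    rw [h, Fin.le_def, hss'] at hi
    omega
  have hjne : j ≠ s' := hsne j hjs
  have hrel : relRank σ s' = B.card + 1 := by
    have hins : (Finset.univ.filter fun i : Fin n => i ≤ s' ∧ σ i ≤ σ s') = insert s' B := by
      ext i
      rw [Finset.mem_insert, hB, Finset.mem_filter, Finset.mem_filter]
      constructor
      · rintro ⟨_, hi1, hi2⟩
        by_cases h : i = s'
        · exact Or.inl h
        · right
          refine ⟨Finset.mem_univ _, ?_, lt_of_le_of_ne hi2 (fun he => h (σ.injective he))⟩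
          rw [Fin.le_def] at hi1 ⊢
          rw [hss'] at hi1
          have : (i:ℕ) ≠ (s':ℕ) := fun he => h (Fin.ext he)
          rw [hss'] at this
          omega
      · rintro (h | ⟨_, hi1, hi2⟩)
        · subst h
          exact ⟨Finset.mem_univ _, le_refl _, le_refl _⟩
        · refine ⟨Finset.mem_univ _, ?_, le_of_lt hi2⟩
          rw [Fin.le_def] at hi1 ⊢
          omega
    rw [relRank, hins, Finset.card_insert_of_notMem]
    rw [hB, Finset.mem_filter]
    rintro ⟨_, h1, _⟩
    exact hsne s' h1 rfl
  constructor
  · intro hlt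
    rw [hrel]
    have hsub : insert j B ⊆ A := by
      intro i hi
      rw [Finset.mem_insert] at hi
      rw [hA, Finset.mem_filter]
      rcases hi with h | h
      · subst h
        exact ⟨Finset.mem_univ _, hjs, le_refl _⟩
      · rw [hB, Finset.mem_filter] at h
        exact ⟨Finset.mem_univ _, h.2.1, le_of_lt (lt_trans h.2.2 hlt)⟩
    have hjB : j ∉ B := by
      rw [hB, Finset.mem_filter]
      rintro ⟨_, _, h2⟩
      exact absurd (lt_trans h2 hlt) (lt_irrefl _)
    calc B.card + 1 = (insert j B).card := (Finset.card_insert_of_notMem hjB).symm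
      _ ≤ A.card := Finset.card_le_card hsub
  · intro hcard
    by_contra hge
    push_neg at hge
    have hne : σ s' ≠ σ j := fun h => hjne (σ.injective h).symm
    have hlt : σ j < σ s' := lt_of_le_of_ne hge (Ne.symm hne)
    have hsub : A ⊆ B := by
      intro i hi
      rw [hA, Finset.mem_filter] at hi
      rw [hB, Finset.mem_filter]
      exact ⟨Finset.mem_univ _, hi.2.1, lt_of_le_of_lt hi.2.2 hlt⟩
    have := Finset.card_le_card hsub
    have hprA : pr σ j s = A.card := rfl
    rw [hrel] at hcard
    omega

lemma pr_step {n : ℕ} (σ : Equiv.Perm (Fin n)) {j s s' : Fin n}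
    (hjs : j ≤ s) (hss' : (s':ℕ) = (s:ℕ)+1) :
    pr σ j s' = pr σ j s + (if relRank σ s' ≤ pr σ j s then 1 else 0) := by
  classical
  have hiff := relRank_lt_iff σ hjs hss'
  have hsne : ∀ i : Fin n, i ≤ s → i ≠ s' := by
    intro i hi h
    rw [h, Fin.le_def, hss'] at hi
    omega
  have hjne : j ≠ s' := hsne j hjs
  have hle_iff : ∀ i : Fin n, i ≤ s' ↔ (i ≤ s ∨ i = s') := by
    intro i
    rw [Fin.le_def, Fin.le_def, Fin.ext_iff, hss']
    omega
  by_cases h : σ s' < σ j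
  · rw [if_pos (hiff.mp h)]
    have hins : (Finset.univ.filter fun i : Fin n => i ≤ s' ∧ σ i ≤ σ j)
        = insert s' (Finset.univ.filter fun i : Fin n => i ≤ s ∧ σ i ≤ σ j) := by
      ext i
      rw [Finset.mem_insert, Finset.mem_filter, Finset.mem_filter]
      constructor
      · rintro ⟨_, h1, h2⟩
        rcases (hle_iff i).mp h1 with h' | h'
        · exact Or.inr ⟨Finset.mem_univ _, h', h2⟩
        · exact Or.inl h'
      · rintro (h' | ⟨_, h1, h2⟩)
        · subst h'
          exact ⟨Finset.mem_univ _, le_refl _, le_of_lt h⟩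
        · exact ⟨Finset.mem_univ _, (hle_iff i).mpr (Or.inl h1), h2⟩
    rw [pr, pr, hins, Finset.card_insert_of_notMem]
    rw [Finset.mem_filter]
    rintro ⟨_, h1, _⟩
    exact hsne s' h1 rfl
  · rw [if_neg (fun hc => h (hiff.mpr hc))]
    have heq : (Finset.univ.filter fun i : Fin n => i ≤ s' ∧ σ i ≤ σ j)
        = Finset.univ.filter fun i : Fin n => i ≤ s ∧ σ i ≤ σ j := by
      ext i
      rw [Finset.mem_filter, Finset.mem_filter]
      constructor
      · rintro ⟨_, h1, h2⟩
        rcases (hle_iff i).mp h1 with h' | h'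
        · exact ⟨Finset.mem_univ _, h', h2⟩
        · subst h'
          exact absurd (lt_of_le_of_ne h2 (fun he => hjne (σ.injective he).symm)) h
      · rintro ⟨_, h1, h2⟩
        exact ⟨Finset.mem_univ _, (hle_iff i).mpr (Or.inl h1), h2⟩
    rw [pr, pr, heq, add_zero]

lemma pr_evo {n : ℕ} (σ : Equiv.Perm (Fin n)) (j : Fin n) :
    ∀ f (s : Fin n), j ≤ s → (s:ℕ) + f = n - 1 →
    evo (cv (relcode σ)) f (s:ℕ) (pr σ j s) = (σ j : ℕ) + 1 := by
  intro f
  induction f with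
  | zero =>
      intro s hjs hs
      rw [evo]
      exact pr_last σ j s (by omega)
  | succ f ih =>
      intro s hjs hs
      have hs1 : (s:ℕ)+1 < n := by
        have := s.isLt
        omega
      rw [evo, cv_relcode σ hs1]
      have hstep := pr_step σ hjs (rfl : ((⟨(s:ℕ)+1, hs1⟩ : Fin n):ℕ) = (s:ℕ)+1)
      have harg : (if relRank σ ⟨(s:ℕ)+1, hs1⟩ ≤ pr σ j s then pr σ j s + 1 else pr σ j s)
          = pr σ j ⟨(s:ℕ)+1, hs1⟩ := by
        rw [hstep]
        split <;> omega
      rw [harg]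
      have hj1 : j ≤ (⟨(s:ℕ)+1, hs1⟩ : Fin n) := by
        rw [Fin.le_def] at hjs ⊢
        simp only [Fin.val_mk]
        omega
      exact ih ⟨(s:ℕ)+1, hs1⟩ hj1 (by simp only [Fin.val_mk]; omega)

lemma evo_absRank {n : ℕ} (σ : Equiv.Perm (Fin n)) (j : Fin n) :
    evo (cv (relcode σ)) (n-1-(j:ℕ)) (j:ℕ) (cv (relcode σ) (j:ℕ)) = absRank σ j := by
  have h := pr_evo σ j (n-1-(j:ℕ)) j le_rfl (by have := j.isLt; omega)
  rw [pr_self] at h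
  rw [cv_relcode σ j.isLt, show (⟨(j:ℕ), j.isLt⟩ : Fin n) = j from Fin.ext rfl]
  rw [absRank]
  exact h

lemma absRank_eq_payoff {n : ℕ} (k : ℕ) (σ : Equiv.Perm (Fin n)) (j : Fin n) :
    (if absRank σ j = k then (1:ℝ) else 0) = payoff n k (relcode σ) (j:ℕ) := by
  rw [payoff]
  exact (if_congr (by rw [evo_absRank]) rfl rfl).symm

lemma relcode_inj {n : ℕ} : Function.Injective (relcode (n := n)) := by
  intro σ σ' h
  apply Equiv.ext
  intro j
  have h1 := evo_absRank σ j
  have h2 := evo_absRank σ' j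
  rw [h] at h1
  rw [h1] at h2
  rw [absRank, absRank] at h2
  exact Fin.ext (by omega)

lemma prod_fin_succ : ∀ n : ℕ, (∏ t : Fin n, ((t:ℕ)+1)) = n.factorial := by
  intro n
  induction n with
  | zero => simp
  | succ m ih =>
      rw [Fin.prod_univ_castSucc]
      simp only [Fin.coe_castSucc, Fin.val_last]
      rw [ih, Nat.factorial_succ, Nat.mul_comm]

lemma card_code (n : ℕ) : Fintype.card (Code n) = n.factorial := by
  rw [show Fintype.card (Code n) = ∏ t : Fin n, Fintype.card (Fin ((t:ℕ)+1)) from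
    Fintype.card_pi]
  simp only [Fintype.card_fin]
  exact prod_fin_succ n

noncomputable def codeEquiv (n : ℕ) : Equiv.Perm (Fin n) ≃ Code n :=
  Equiv.ofBijective relcode ((Fintype.bijective_iff_injective_and_card _).mpr
    ⟨relcode_inj, by rw [card_code, Fintype.card_perm, Fintype.card_fin]⟩)

lemma relcode_symm {n : ℕ} (c : Code n) : relcode ((codeEquiv n).symm c) = c :=
  (codeEquiv n).apply_symm_apply c

lemma relcode_symm_relcode {n : ℕ} (σ : Equiv.Perm (Fin n)) :
    (codeEquiv n).symm (relcode σ) = σ :=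
  (codeEquiv n).symm_apply_apply σ

/-! ### transfer of the probability and the main evaluation -/

lemma selectProb_eq {n : ℕ} (k : ℕ) (τ : Equiv.Perm (Fin n) → Fin n) :
    selectProb n {k} τ
      = (∑ c : Code n, payoff n k c ((τ ((codeEquiv n).symm c) : ℕ))) / (n.factorial : ℝ) := by
  rw [selectProb]
  congr 1
  rw [Finset.card_filter]
  push_cast
  have hcoe : ∀ σ : Equiv.Perm (Fin n), codeEquiv n σ = relcode σ := fun _ => rfl
  calc ∑ σ : Equiv.Perm (Fin n), (if absRank σ (τ σ) ∈ ({k} : Finset ℕ) then (1:ℝ) else 0)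
      = ∑ σ : Equiv.Perm (Fin n),
          payoff n k (relcode σ) ((τ ((codeEquiv n).symm (relcode σ)) : ℕ)) := by
        apply Finset.sum_congr rfl
        intro σ _
        rw [show (codeEquiv n).symm (relcode σ) = σ from relcode_symm_relcode σ]
        exact (if_congr (Finset.mem_singleton) rfl rfl).trans (absRank_eq_payoff k σ (τ σ))
    _ = ∑ σ : Equiv.Perm (Fin n),
          payoff n k (codeEquiv n σ) ((τ ((codeEquiv n).symm (codeEquiv n σ)) : ℕ)) := by
        exact Finset.sum_congr rfl (fun σ _ => by rw [hcoe σ])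
    _ = ∑ c : Code n, payoff n k c ((τ ((codeEquiv n).symm c) : ℕ)) :=
        Equiv.sum_comp (codeEquiv n) (fun c => payoff n k c ((τ ((codeEquiv n).symm c) : ℕ)))

lemma pRank_eq_V (n k : ℕ) (hn : 1 ≤ n) (hk1 : 1 ≤ k) (hk2 : k ≤ n) :
    pRank n k = V n k (n-1) := by
  have hfac : (0:ℝ) < (n.factorial : ℝ) := by exact_mod_cast n.factorial_pos
  rw [pRank, pSet]
  apply IsGreatest.csSup_eq
  constructor
  · refine ⟨fun σ => greedy n k hn (relcode σ), ?_, ?_⟩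
    · intro σ σ' hag
      apply greedy_adapted n k hn (relcode σ) (relcode σ')
      intro i hi
      have h := hag i hi
      apply Fin.ext
      show relRank σ i - 1 = relRank σ' i - 1
      rw [h]
    · rw [selectProb_eq]
      rw [Finset.sum_congr rfl (fun c _ => by rw [relcode_symm c])]
      rw [E_top k hn hk1 hk2]
      field_simp
  · rintro x ⟨τ, hSR, rfl⟩
    rw [selectProb_eq, div_le_iff₀ hfac]
    have hA : Adapted (fun c => τ ((codeEquiv n).symm c)) := by
      intro c c' hag
      simp only
      apply hSR
      intro i hi
      rw [← cv_relcode _ i.isLt, ← cv_relcode _ i.isLt, relcode_symm, relcode_symm]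
      rw [cv, cv, dif_pos i.isLt, dif_pos i.isLt]
      rw [hag ⟨(i:ℕ), i.isLt⟩ (by rw [show (⟨(i:ℕ), i.isLt⟩ : Fin n) = i from Fin.ext rfl]; exact hi)]
    calc (∑ c : Code n, payoff n k c ((τ ((codeEquiv n).symm c) : ℕ)))
        ≤ (n.factorial : ℝ) * V n k (n-1) := U_top k hn hk1 hk2 _ hA
      _ = V n k (n-1) * (n.factorial : ℝ) := mul_comm _ _

end Secretary

theorem pRank_max_at_extremes (n k : ℕ) (hn : 3 ≤ n) (hk1 : 1 < k) (hkn : k < n) :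
    pRank n 1 = pRank n n ∧ pRank n k < pRank n 1 := by
  constructor
  · rw [Secretary.pRank_eq_V n 1 (by omega) le_rfl (by omega),
      Secretary.pRank_eq_V n n (by omega) (by omega) le_rfl,
      Secretary.V_top_eq n (by omega) (n-1) le_rfl]
  · rw [Secretary.pRank_eq_V n k (by omega) (by omega) (by omega),
      Secretary.pRank_eq_V n 1 (by omega) le_rfl (by omega)]
    exact Secretary.V_final n k hn hk1 hkn
end

section
/- The limits d_1 = lim_{n→∞} a_n/n and d_2 = lim_{n→∞} b_n/n exist and equal d_1 = 2/(2√e + √(4e - 6√e)) and d_2 = 1/√e, where a_n and b_n are the thresholds of the optimal rule for selecting the 3rd best candidate. -/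
open Finset

/-- The threshold `b_n = min{ j : 2 ≤ j ≤ n, ∑_{i=j+1}^n 1/(i-2) ≤ 1/2 }` (empty sum = 0). -/
noncomputable def bThresh (n : ℕ) : ℕ :=
  sInf {j : ℕ | 2 ≤ j ∧ j ≤ n ∧ ∑ i ∈ Finset.Icc (j + 1) n, (1 : ℝ) / ((i : ℝ) - 2) ≤ 1 / 2}

/-- `u_n = (b_n - 2)(2n - 4) ∑_{i=b_n}^n 1/(i-2)`. -/
noncomputable def uVal (n : ℕ) : ℝ :=
  ((bThresh n : ℝ) - 2) * (2 * (n : ℝ) - 4) *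
    ∑ i ∈ Finset.Icc (bThresh n) n, (1 : ℝ) / ((i : ℝ) - 2)

/-- `f_n(x) = 3x² - (1+4n)x + (n-2)b_n + 2(n+1) + u_n`. -/
noncomputable def fPoly (n : ℕ) (x : ℝ) : ℝ :=
  3 * x ^ 2 - (1 + 4 * (n : ℝ)) * x + ((n : ℝ) - 2) * (bThresh n : ℝ) + 2 * ((n : ℝ) + 1) + uVal n

/-- The threshold `a_n = min{ j : 2 ≤ j ≤ n, f_n(j) ≤ 0 }`. -/
noncomputable def aThresh (n : ℕ) : ℕ :=
  sInf {j : ℕ | 2 ≤ j ∧ j ≤ n ∧ fPoly n (j : ℝ) ≤ 0}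

set_option maxHeartbeats 1000000

open Filter

lemma log_ratio_le (x : ℝ) (hx : 1 < x) : Real.log (x/(x-1)) ≤ 1/(x-1) := by
  have hx1 : 0 < x - 1 := by linarith
  have h := Real.log_le_sub_one_of_pos (x := x/(x-1)) (div_pos (by linarith) hx1)
  have h2 : x/(x-1) - 1 = 1/(x-1) := by field_simp; ring
  linarith

lemma le_log_ratio (y : ℝ) (hy : 1 < y) : 1/y ≤ Real.log (y/(y-1)) := by
  have hy1 : 0 < y - 1 := by linarith
  have h := Real.log_le_sub_one_of_pos (x := (y-1)/y) (div_pos hy1 (by linarith))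
  have h2 : Real.log ((y-1)/y) = - Real.log (y/(y-1)) := by
    rw [← Real.log_inv]; congr 1; field_simp
  have h3 : (y-1)/y - 1 = -(1/y) := by field_simp; ring
  linarith

lemma sum_inv_log_lower (a : ℕ) (ha : 3 ≤ a) :
    ∀ n : ℕ, a - 1 ≤ n → Real.log (((n:ℝ)-1)/((a:ℝ)-2)) ≤ ∑ i ∈ Icc a n, 1/((i:ℝ)-2) := by
  intro n hn
  induction n, hn using Nat.le_induction with
  | base =>
      rw [Finset.Icc_eq_empty (by omega), Finset.sum_empty, Nat.cast_sub (by omega)]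
      simp only [Nat.cast_one]
      rw [show (a:ℝ) - 1 - 1 = (a:ℝ) - 2 by ring, div_self, Real.log_one]
      have : (3:ℝ) ≤ (a:ℝ) := by exact_mod_cast ha
      linarith
  | succ n hn ih =>
      rw [Finset.sum_Icc_succ_top (by omega)]
      have hn3 : (2:ℝ) ≤ (n:ℝ) := by exact_mod_cast (show 2 ≤ n by omega)
      have ha3 : (3:ℝ) ≤ (a:ℝ) := by exact_mod_cast ha
      have hb1 : (a:ℝ) - 2 ≠ 0 := by linarith
      have hb2 : (n:ℝ) - 1 ≠ 0 := by linarith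
      have hlog : Real.log ((((n:ℝ)+1)-1)/((a:ℝ)-2)) =
          Real.log (((n:ℝ)-1)/((a:ℝ)-2)) + Real.log ((n:ℝ)/((n:ℝ)-1)) := by
        rw [← Real.log_mul (div_pos (by linarith) (by linarith)).ne'
          (div_pos (by linarith) (by linarith)).ne']
        congr 1
        field_simp
        ring
      have h2 := log_ratio_le (n:ℝ) (by linarith)
      push_cast
      rw [hlog, show 1/(((n:ℝ)+1)-2) = 1/((n:ℝ)-1) by ring_nf]
      linarith

lemma sum_inv_log_upper (a : ℕ) (ha : 4 ≤ a) :
    ∀ n : ℕ, a - 1 ≤ n → ∑ i ∈ Icc a n, 1/((i:ℝ)-2) ≤ Real.log (((n:ℝ)-2)/((a:ℝ)-3)) := by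
  intro n hn
  induction n, hn using Nat.le_induction with
  | base =>
      rw [Finset.Icc_eq_empty (by omega), Finset.sum_empty, Nat.cast_sub (by omega)]
      simp only [Nat.cast_one]
      rw [show (a:ℝ) - 1 - 2 = (a:ℝ) - 3 by ring, div_self, Real.log_one]
      have : (4:ℝ) ≤ (a:ℝ) := by exact_mod_cast ha
      linarith
  | succ n hn ih =>
      rw [Finset.sum_Icc_succ_top (by omega)]
      have hn3 : (3:ℝ) ≤ (n:ℝ) := by exact_mod_cast (show 3 ≤ n by omega)
      have ha3 : (4:ℝ) ≤ (a:ℝ) := by exact_mod_cast ha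
      have hb1 : (a:ℝ) - 3 ≠ 0 := by linarith
      have hb2 : (n:ℝ) - 2 ≠ 0 := by linarith
      have hlog : Real.log ((((n:ℝ)+1)-2)/((a:ℝ)-3)) =
          Real.log (((n:ℝ)-2)/((a:ℝ)-3)) + Real.log (((n:ℝ)-1)/((n:ℝ)-2)) := by
        rw [← Real.log_mul (div_pos (by linarith) (by linarith)).ne'
          (div_pos (by linarith) (by linarith)).ne']
        congr 1
        field_simp
        ring
      have h2 := le_log_ratio ((n:ℝ)-1) (by linarith)
      push_cast
      rw [hlog, show 1/(((n:ℝ)+1)-2) = 1/((n:ℝ)-1) by ring_nf]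
      rw [show (n:ℝ)-1-1 = (n:ℝ)-2 by ring] at h2
      linarith

lemma exp_half_mul : Real.exp (1/2:ℝ) * Real.exp (1/2:ℝ) = Real.exp 1 := by
  rw [← Real.exp_add]; norm_num

lemma exp_half_lt_two : Real.exp (1/2:ℝ) < 2 := by
  nlinarith [Real.exp_pos (1/2:ℝ), Real.exp_one_lt_d9, exp_half_mul]

lemma exp_half_gt : (8:ℝ)/5 < Real.exp (1/2:ℝ) := by
  nlinarith [Real.exp_pos (1/2:ℝ), Real.exp_one_gt_d9, exp_half_mul]

lemma exp_neg_half : Real.exp (-(1/2):ℝ) * Real.exp (1/2:ℝ) = 1 := by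
  rw [← Real.exp_add]; norm_num

lemma exp_neg_half_bounds : (1/2:ℝ) < Real.exp (-(1/2):ℝ) ∧ Real.exp (-(1/2):ℝ) < 5/8 := by
  constructor <;> nlinarith [exp_neg_half, exp_half_lt_two, exp_half_gt, Real.exp_pos (-(1/2):ℝ)]

lemma bThresh_facts (n : ℕ) (hn : 20 ≤ n) :
    4 ≤ bThresh n ∧ bThresh n ≤ n ∧
    ((n:ℝ)-1) * Real.exp (-(1/2):ℝ) + 1 ≤ (bThresh n : ℝ) ∧
    (bThresh n : ℝ) ≤ ((n:ℝ)-2) * Real.exp (-(1/2):ℝ) + 3 ∧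
    1/2 < ∑ i ∈ Icc (bThresh n) n, (1:ℝ)/((i:ℝ)-2) ∧
    ∑ i ∈ Icc (bThresh n) n, (1:ℝ)/((i:ℝ)-2) ≤ 1/2 + 1/((bThresh n:ℝ)-2) := by
  have hne : {j : ℕ | 2 ≤ j ∧ j ≤ n ∧
      ∑ i ∈ Finset.Icc (j + 1) n, (1 : ℝ) / ((i : ℝ) - 2) ≤ 1 / 2}.Nonempty := by
    refine ⟨n, by omega, le_refl n, ?_⟩
    rw [Finset.Icc_eq_empty (by omega), Finset.sum_empty]; norm_num
  unfold bThresh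
  have hmem := Nat.sInf_mem hne
  set b := sInf {j : ℕ | 2 ≤ j ∧ j ≤ n ∧
      ∑ i ∈ Finset.Icc (j + 1) n, (1 : ℝ) / ((i : ℝ) - 2) ≤ 1 / 2} with hbdef
  obtain ⟨hb2, hbn, hbsum⟩ := hmem
  have hnR : (20:ℝ) ≤ (n:ℝ) := by exact_mod_cast hn
  have hbR : (2:ℝ) ≤ (b:ℝ) := by exact_mod_cast hb2
  -- lower bound
  have hlow := sum_inv_log_lower (b+1) (by omega) n (by omega)
  have hcast : ((b+1:ℕ):ℝ) - 2 = (b:ℝ) - 1 := by push_cast; ring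
  rw [hcast] at hlow
  have hlog_le : Real.log (((n:ℝ)-1)/((b:ℝ)-1)) ≤ 1/2 := le_trans hlow hbsum
  have hbpos : (0:ℝ) < (b:ℝ) - 1 := by linarith
  have hx : ((n:ℝ)-1)/((b:ℝ)-1) ≤ Real.exp (1/2) :=
    (Real.log_le_iff_le_exp (div_pos (by linarith) hbpos)).mp hlog_le
  have hexp := exp_neg_half
  have hexppos := Real.exp_pos (-(1/2):ℝ)
  have hexppos2 := Real.exp_pos ((1/2):ℝ)
  have hlower : ((n:ℝ)-1) * Real.exp (-(1/2):ℝ) + 1 ≤ (b:ℝ) := by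
    have h1 : (n:ℝ)-1 ≤ ((b:ℝ)-1) * Real.exp (1/2) := by
      rw [div_le_iff₀ hbpos] at hx; linarith
    nlinarith
  -- b ≥ 9
  have hb9 : 9 ≤ b := by
    obtain ⟨he1, he2⟩ := exp_neg_half_bounds
    have : (9:ℝ) ≤ (b:ℝ) := by nlinarith
    exact_mod_cast this
  -- minimality: b-1 not in set
  have hnotmem : b - 1 ∉ {j : ℕ | 2 ≤ j ∧ j ≤ n ∧
      ∑ i ∈ Finset.Icc (j + 1) n, (1 : ℝ) / ((i : ℝ) - 2) ≤ 1 / 2} :=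
    Nat.notMem_of_lt_sInf (by omega)
  have hTgt : 1/2 < ∑ i ∈ Icc b n, (1:ℝ)/((i:ℝ)-2) := by
    by_contra h
    exact hnotmem ⟨by omega, by omega, by
      rw [show b - 1 + 1 = b by omega]; linarith⟩
  -- upper bound
  have hupp := sum_inv_log_upper b (by omega) n (by omega)
  have hlog_gt : 1/2 < Real.log (((n:ℝ)-2)/((b:ℝ)-3)) := lt_of_lt_of_le hTgt hupp
  have hb3pos : (0:ℝ) < (b:ℝ) - 3 := by
    have : (9:ℝ) ≤ (b:ℝ) := by exact_mod_cast hb9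
    linarith
  have hx2 : Real.exp (1/2) < ((n:ℝ)-2)/((b:ℝ)-3) :=
    (Real.lt_log_iff_exp_lt (div_pos (by linarith) hb3pos)).mp hlog_gt
  have hupper : (b:ℝ) ≤ ((n:ℝ)-2) * Real.exp (-(1/2):ℝ) + 3 := by
    rw [lt_div_iff₀ hb3pos] at hx2
    nlinarith
  -- T upper
  have hsplit : ∑ i ∈ Icc b n, (1:ℝ)/((i:ℝ)-2)
      = 1/((b:ℝ)-2) + ∑ i ∈ Icc (b+1) n, (1:ℝ)/((i:ℝ)-2) := by
    rw [show Icc b n = insert b (Icc (b+1) n) by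
      ext x; simp only [Finset.mem_Icc, Finset.mem_insert]; omega]
    rw [Finset.sum_insert (by simp only [Finset.mem_Icc]; omega)]
  refine ⟨by omega, hbn, hlower, hupper, hTgt, ?_⟩
  rw [hsplit]; linarith

noncomputable def Tsum (n : ℕ) : ℝ := ∑ i ∈ Icc (bThresh n) n, (1:ℝ)/((i:ℝ)-2)
noncomputable def Cval (n : ℕ) : ℝ :=
  ((n:ℝ)-2) * (bThresh n : ℝ) + 2*((n:ℝ)+1) + uVal n
noncomputable def Dval (n : ℕ) : ℝ := (1+4*(n:ℝ))^2 - 12 * Cval n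

lemma tendsto_linear_div (u v : ℝ) :
    Tendsto (fun n : ℕ => (u*(n:ℝ)+v)/(n:ℝ)) atTop (nhds u) := by
  have h : Tendsto (fun n : ℕ => u + v*(1/(n:ℝ))) atTop (nhds (u + v*0)) :=
    tendsto_const_nhds.add (tendsto_const_nhds.mul tendsto_one_div_atTop_nhds_zero_nat)
  rw [mul_zero, add_zero] at h
  apply h.congr'
  filter_upwards [Filter.eventually_gt_atTop 0] with n hn
  have hn' : (0:ℝ) < (n:ℝ) := by exact_mod_cast hn
  field_simp

lemma b_div_tendsto :
    Tendsto (fun n : ℕ => (bThresh n : ℝ)/(n:ℝ)) atTop (nhds (Real.exp (-(1/2):ℝ))) := by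
  set β := Real.exp (-(1/2):ℝ) with hβ
  apply tendsto_of_tendsto_of_tendsto_of_le_of_le'
    (g := fun n : ℕ => (β*(n:ℝ)+(1-β))/(n:ℝ)) (h := fun n : ℕ => (β*(n:ℝ)+(3-2*β))/(n:ℝ))
    (tendsto_linear_div β (1-β)) (tendsto_linear_div β (3-2*β))
  · filter_upwards [Filter.eventually_ge_atTop 20] with n hn
    obtain ⟨_, _, h1, _, _, _⟩ := bThresh_facts n hn
    have hn' : (0:ℝ) < (n:ℝ) := by
      have : (20:ℝ) ≤ (n:ℝ) := by exact_mod_cast hn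
      linarith
    exact div_le_div_of_nonneg_right (by linarith) hn'.le
  · filter_upwards [Filter.eventually_ge_atTop 20] with n hn
    obtain ⟨_, _, _, h2, _, _⟩ := bThresh_facts n hn
    have hn' : (0:ℝ) < (n:ℝ) := by
      have : (20:ℝ) ≤ (n:ℝ) := by exact_mod_cast hn
      linarith
    exact div_le_div_of_nonneg_right (by linarith) hn'.le

lemma T_tendsto : Tendsto Tsum atTop (nhds (1/2)) := by
  apply tendsto_of_tendsto_of_tendsto_of_le_of_le'
    (g := fun _ : ℕ => (1/2:ℝ)) (h := fun n : ℕ => 1/2 + 4*(1/(n:ℝ)))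
    tendsto_const_nhds
  · have h : Tendsto (fun n : ℕ => 1/2 + 4*(1/(n:ℝ))) atTop (nhds (1/2 + 4*0)) :=
      tendsto_const_nhds.add (tendsto_const_nhds.mul tendsto_one_div_atTop_nhds_zero_nat)
    rw [mul_zero, add_zero] at h
    exact h
  · filter_upwards [Filter.eventually_ge_atTop 20] with n hn
    exact (bThresh_facts n hn).2.2.2.2.1.le
  · filter_upwards [Filter.eventually_ge_atTop 20] with n hn
    obtain ⟨hb4, hbn, h1, _, _, h3⟩ := bThresh_facts n hn
    have hn' : (20:ℝ) ≤ (n:ℝ) := by exact_mod_cast hn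
    obtain ⟨he1, _⟩ := exp_neg_half_bounds
    have hb : (n:ℝ)/4 ≤ (bThresh n:ℝ) - 2 := by nlinarith
    have h4 : 1/((bThresh n:ℝ)-2) ≤ 4*(1/(n:ℝ)) := by
      rw [show 4*(1/(n:ℝ)) = 1/((n:ℝ)/4) by field_simp]
      apply one_div_le_one_div_of_le (by linarith) hb
    unfold Tsum
    linarith

lemma bsub_div_tendsto :
    Tendsto (fun n : ℕ => ((bThresh n : ℝ)-2)/(n:ℝ)) atTop (nhds (Real.exp (-(1/2):ℝ))) := by
  have h := b_div_tendsto.sub (tendsto_linear_div 0 2)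
  rw [sub_zero] at h
  apply h.congr
  intro n
  rw [div_sub_div_same]
  norm_num

lemma u_div_tendsto :
    Tendsto (fun n : ℕ => uVal n/(n:ℝ)^2) atTop (nhds (Real.exp (-(1/2):ℝ))) := by
  set β := Real.exp (-(1/2):ℝ) with hβ
  have h := (bsub_div_tendsto.mul (tendsto_linear_div 2 (-4))).mul T_tendsto
  rw [show β * 2 * (1/2) = β by ring] at h
  apply h.congr'
  filter_upwards [Filter.eventually_gt_atTop 0] with n hn
  have hn' : (0:ℝ) < (n:ℝ) := by exact_mod_cast hn
  show ((bThresh n:ℝ)-2)/(n:ℝ) * ((2*(n:ℝ)+(-4))/(n:ℝ)) * Tsum n = uVal n/(n:ℝ)^2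
  unfold uVal Tsum
  field_simp
  ring

lemma C_div_tendsto :
    Tendsto (fun n : ℕ => Cval n/(n:ℝ)^2) atTop (nhds (2 * Real.exp (-(1/2):ℝ))) := by
  set β := Real.exp (-(1/2):ℝ) with hβ
  have h1 : Tendsto (fun n : ℕ => ((1*(n:ℝ)+(-2))/(n:ℝ)) * ((bThresh n:ℝ)/(n:ℝ)))
      atTop (nhds (1 * β)) := (tendsto_linear_div 1 (-2)).mul b_div_tendsto
  have h2 : Tendsto (fun n : ℕ => ((2*(n:ℝ)+2)/(n:ℝ)) * (1/(n:ℝ))) atTop (nhds (2*0)) :=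
    (tendsto_linear_div 2 2).mul tendsto_one_div_atTop_nhds_zero_nat
  have h := (h1.add h2).add u_div_tendsto
  rw [show 1*β + 2*0 + β = 2*β by ring] at h
  apply h.congr'
  filter_upwards [Filter.eventually_gt_atTop 0] with n hn
  have hn' : (0:ℝ) < (n:ℝ) := by exact_mod_cast hn
  show (1*(n:ℝ)+(-2))/(n:ℝ) * ((bThresh n:ℝ)/(n:ℝ)) + (2*(n:ℝ)+2)/(n:ℝ) * (1/(n:ℝ))
      + uVal n/(n:ℝ)^2 = Cval n/(n:ℝ)^2
  unfold Cval
  field_simp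
  ring

lemma D_div_tendsto :
    Tendsto (fun n : ℕ => Dval n/(n:ℝ)^2) atTop (nhds (16 - 24 * Real.exp (-(1/2):ℝ))) := by
  set β := Real.exp (-(1/2):ℝ) with hβ
  have h1 : Tendsto (fun n : ℕ => ((4*(n:ℝ)+1)/(n:ℝ))^2) atTop (nhds (4^2)) :=
    (tendsto_linear_div 4 1).pow 2
  have h2 : Tendsto (fun n : ℕ => (12:ℝ) * (Cval n/(n:ℝ)^2)) atTop (nhds (12*(2*β))) :=
    tendsto_const_nhds.mul C_div_tendsto
  have h := h1.sub h2
  rw [show (4:ℝ)^2 - 12*(2*β) = 16 - 24*β by ring] at h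
  apply h.congr'
  filter_upwards [Filter.eventually_gt_atTop 0] with n hn
  have hn' : (0:ℝ) < (n:ℝ) := by exact_mod_cast hn
  show ((4*(n:ℝ)+1)/(n:ℝ))^2 - 12 * (Cval n/(n:ℝ)^2) = Dval n/(n:ℝ)^2
  unfold Dval
  field_simp
  ring

noncomputable def rVal (n : ℕ) : ℝ := ((1+4*(n:ℝ)) - Real.sqrt (Dval n))/6

lemma r_div_tendsto :
    Tendsto (fun n : ℕ => rVal n/(n:ℝ)) atTop
      (nhds ((4 - Real.sqrt (16 - 24 * Real.exp (-(1/2):ℝ)))/6)) := by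
  set β := Real.exp (-(1/2):ℝ) with hβ
  have hsq : Tendsto (fun n : ℕ => Real.sqrt (Dval n/(n:ℝ)^2)) atTop
      (nhds (Real.sqrt (16 - 24*β))) := D_div_tendsto.sqrt
  have h := ((tendsto_linear_div 4 1).sub hsq).div_const 6
  apply h.congr'
  filter_upwards [Filter.eventually_gt_atTop 0] with n hn
  have hn' : (0:ℝ) < (n:ℝ) := by exact_mod_cast hn
  show ((4*(n:ℝ)+1)/(n:ℝ) - Real.sqrt (Dval n/(n:ℝ)^2))/6 = rVal n/(n:ℝ)
  have hs : Real.sqrt (Dval n/(n:ℝ)^2) = Real.sqrt (Dval n)/(n:ℝ) := by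
    rw [show Dval n/(n:ℝ)^2 = Dval n * ((1/(n:ℝ))^2) by field_simp,
      Real.sqrt_mul' _ (by positivity), Real.sqrt_sq (by positivity)]
    field_simp
  rw [hs]
  unfold rVal
  field_simp
  ring

lemma sqrt_bounds : 1 < Real.sqrt (16 - 24 * Real.exp (-(1/2):ℝ)) ∧
    Real.sqrt (16 - 24 * Real.exp (-(1/2):ℝ)) < 2 := by
  obtain ⟨h1, h2⟩ := exp_neg_half_bounds
  have e1 : Real.sqrt 1 < Real.sqrt (16 - 24 * Real.exp (-(1/2):ℝ)) :=
    Real.sqrt_lt_sqrt (by norm_num) (by linarith)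
  have e2 : Real.sqrt (16 - 24 * Real.exp (-(1/2):ℝ)) < Real.sqrt 4 :=
    Real.sqrt_lt_sqrt (by linarith) (by linarith)
  rw [Real.sqrt_one] at e1
  rw [show (4:ℝ) = 2^2 by norm_num, Real.sqrt_sq (by norm_num : (0:ℝ) ≤ 2)] at e2
  exact ⟨e1, e2⟩

lemma d_bounds : 1/3 < (4 - Real.sqrt (16 - 24 * Real.exp (-(1/2):ℝ)))/6 ∧
    (4 - Real.sqrt (16 - 24 * Real.exp (-(1/2):ℝ)))/6 < 1/2 := by
  obtain ⟨h1, h2⟩ := sqrt_bounds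
  constructor <;> linarith

lemma a_sandwich : ∀ᶠ n : ℕ in atTop,
    rVal n ≤ (aThresh n : ℝ) ∧ (aThresh n : ℝ) ≤ rVal n + 1 := by
  obtain ⟨hd1, hd2⟩ := d_bounds
  have hev1 : ∀ᶠ n : ℕ in atTop, 1 < Dval n/(n:ℝ)^2 := by
    apply Filter.Tendsto.eventually_const_lt ?_ D_div_tendsto
    obtain ⟨_, h2⟩ := exp_neg_half_bounds
    linarith
  have hev2 : ∀ᶠ n : ℕ in atTop, rVal n/(n:ℝ) < 1/2 :=
    Filter.Tendsto.eventually_lt_const hd2 r_div_tendsto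
  have hev3 : ∀ᶠ n : ℕ in atTop, 1/3 < rVal n/(n:ℝ) :=
    Filter.Tendsto.eventually_const_lt hd1 r_div_tendsto
  filter_upwards [Filter.eventually_ge_atTop 20, hev1, hev2, hev3] with n h20 hD hr2 hr3
  have hnR : (20:ℝ) ≤ (n:ℝ) := by exact_mod_cast h20
  have hnpos : (0:ℝ) < (n:ℝ) := by linarith
  -- D bounds
  have hDge : (n:ℝ)^2 < Dval n := by
    rw [lt_div_iff₀ (by positivity)] at hD
    linarith
  have hDnn : 0 ≤ Dval n := by nlinarith
  have hs2 : Real.sqrt (Dval n)^2 = Dval n := Real.sq_sqrt hDnn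
  have hsge : (n:ℝ) ≤ Real.sqrt (Dval n) := by
    have := Real.sqrt_le_sqrt hDge.le
    rwa [Real.sqrt_sq hnpos.le] at this
  have hsnn : 0 ≤ Real.sqrt (Dval n) := Real.sqrt_nonneg _
  set s := Real.sqrt (Dval n) with hsdef
  set r := rVal n with hrdef
  have hrval : r = ((1+4*(n:ℝ)) - s)/6 := rfl
  set rp : ℝ := ((1+4*(n:ℝ)) + s)/6 with hrpdef
  -- factorization
  have hfact : ∀ x : ℝ, fPoly n x = 3*(x - r)*(x - rp) := by
    intro x
    have hC : fPoly n x = 3*x^2 - (1+4*(n:ℝ))*x + Cval n := by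
      unfold fPoly Cval; ring
    have hDdef : Dval n = (1+4*(n:ℝ))^2 - 12*Cval n := rfl
    rw [hC, hrval, hrpdef]
    have : s^2 = (1+4*(n:ℝ))^2 - 12*Cval n := by rw [hs2, hDdef]
    nlinarith [this]
  -- r bounds
  have hrlow : (n:ℝ)/3 < r := by
    rw [lt_div_iff₀ hnpos] at hr3
    linarith
  have hrhigh : r < (n:ℝ)/2 := by
    rw [div_lt_iff₀ hnpos] at hr2
    linarith
  have hrpos : (0:ℝ) < r := by linarith
  have hrrp : r + 1 ≤ rp := by
    rw [hrval, hrpdef]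
    linarith
  set m := ⌈r⌉₊ with hmdef
  have hmge : r ≤ (m:ℝ) := Nat.le_ceil r
  have hmlt : (m:ℝ) < r + 1 := Nat.ceil_lt_add_one hrpos.le
  have hm2 : 2 ≤ m := by
    have : (2:ℝ) ≤ (m:ℝ) := by linarith
    exact_mod_cast this
  have hmn : m ≤ n := by
    have : (m:ℝ) ≤ (n:ℝ) := by linarith
    exact_mod_cast this
  have hfm : fPoly n (m:ℝ) ≤ 0 := by
    rw [hfact]
    have h1 : (0:ℝ) ≤ (m:ℝ) - r := by linarith
    have h2 : (m:ℝ) - rp ≤ 0 := by linarith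
    nlinarith
  have hmem : m ∈ {j : ℕ | 2 ≤ j ∧ j ≤ n ∧ fPoly n (j : ℝ) ≤ 0} := ⟨hm2, hmn, hfm⟩
  have hane : {j : ℕ | 2 ≤ j ∧ j ≤ n ∧ fPoly n (j : ℝ) ≤ 0}.Nonempty := ⟨m, hmem⟩
  have hale : aThresh n ≤ m := Nat.sInf_le hmem
  have hamem : 2 ≤ aThresh n ∧ aThresh n ≤ n ∧ fPoly n ((aThresh n : ℕ) : ℝ) ≤ 0 :=
    Nat.sInf_mem hane
  obtain ⟨ha2, han, hfa⟩ := hamem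
  constructor
  · by_contra h
    push_neg at h
    rw [hfact] at hfa
    have hja : ((aThresh n : ℝ) - r) < 0 := by linarith
    have hjb : ((aThresh n : ℝ) - rp) < 0 := by linarith
    nlinarith
  · have : (aThresh n : ℝ) ≤ (m:ℝ) := by exact_mod_cast hale
    linarith

lemma a_div_tendsto :
    Tendsto (fun n : ℕ => (aThresh n : ℝ)/(n:ℝ)) atTop
      (nhds ((4 - Real.sqrt (16 - 24 * Real.exp (-(1/2):ℝ)))/6)) := by
  apply tendsto_of_tendsto_of_tendsto_of_le_of_le'
    (g := fun n : ℕ => rVal n/(n:ℝ)) (h := fun n : ℕ => rVal n/(n:ℝ) + 1/(n:ℝ))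
    r_div_tendsto
  · have h := r_div_tendsto.add tendsto_one_div_atTop_nhds_zero_nat
    rwa [add_zero] at h
  · filter_upwards [a_sandwich, Filter.eventually_gt_atTop 0] with n h hn
    have hnpos : (0:ℝ) < (n:ℝ) := by exact_mod_cast hn
    exact div_le_div_of_nonneg_right h.1 hnpos.le
  · filter_upwards [a_sandwich, Filter.eventually_gt_atTop 0] with n h hn
    have hnpos : (0:ℝ) < (n:ℝ) := by exact_mod_cast hn
    rw [← add_div]
    exact div_le_div_of_nonneg_right h.2 hnpos.le

-- constant identification
lemma exp_half_mul' : Real.exp (1/2:ℝ) * Real.exp (1/2:ℝ) = Real.exp 1 := by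
  rw [← Real.exp_add]; norm_num

lemma const_eq : (4 - Real.sqrt (16 - 24 * Real.exp (-(1/2):ℝ)))/6
    = 2 / (2 * Real.sqrt (Real.exp 1) +
        Real.sqrt (4 * Real.exp 1 - 6 * Real.sqrt (Real.exp 1))) := by
  obtain ⟨hb1, hb2⟩ := exp_neg_half_bounds
  set β := Real.exp (-(1/2):ℝ) with hβ
  have hs_eq : Real.sqrt (Real.exp 1) = Real.exp (1/2:ℝ) := by
    rw [show Real.exp 1 = Real.exp (1/2:ℝ)^2 by rw [sq]; exact exp_half_mul'.symm]
    exact Real.sqrt_sq (Real.exp_pos _).le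
  set s := Real.exp (1/2:ℝ) with hsdef
  have hspos : 0 < s := Real.exp_pos _
  have hsβ : β * s = 1 := by rw [hβ, hsdef, ← Real.exp_add]; norm_num
  have hs2 : s^2 = Real.exp 1 := by rw [sq]; exact exp_half_mul'
  have hsgt : (8:ℝ)/5 < s := by nlinarith
  have hslt : s < 2 := by nlinarith
  set A := Real.sqrt (16 - 24*β) with hA
  have hA2 : A^2 = 16 - 24*β := Real.sq_sqrt (by linarith)
  have hAnn : 0 ≤ A := Real.sqrt_nonneg _
  have hAlt : A < 2 := by nlinarith
  set B := Real.sqrt (4 * Real.exp 1 - 6 * Real.sqrt (Real.exp 1)) with hB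
  have hnnB : (0:ℝ) ≤ 4 * Real.exp 1 - 6 * Real.sqrt (Real.exp 1) := by
    rw [hs_eq, ← hs2]; nlinarith
  have hB2 : B^2 = 4*s^2 - 6*s := by
    rw [hB, Real.sq_sqrt hnnB, hs_eq, ← hs2]
  have hBnn : 0 ≤ B := Real.sqrt_nonneg _
  have hBA : 2*B = s*A := by
    have h1 : (2*B - s*A) * (2*B + s*A) = 0 := by
      have hsq : (2*B)^2 = (s*A)^2 := by
        rw [mul_pow, mul_pow, hA2, hB2]
        nlinarith [hsβ]
      nlinarith [hsq]
    rcases mul_eq_zero.mp h1 with h | h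
    · linarith
    · have hB0 : B = 0 := by nlinarith [mul_nonneg hspos.le hAnn]
      have hsA0 : s*A = 0 := by nlinarith [mul_nonneg hspos.le hAnn]
      rw [hB0, hsA0]; ring

  have hden : 0 < 2*s + B := by nlinarith
  rw [hs_eq]
  rw [div_eq_div_iff (by norm_num : (6:ℝ) ≠ 0) hden.ne']
  linear_combination ((4-A)/2) * hBA + (-(s/2)) * hA2 + 12 * hsβ

lemma sqrt_exp_eq : Real.sqrt (Real.exp 1) = Real.exp (1/2:ℝ) := by
  rw [show Real.exp 1 = Real.exp (1/2:ℝ)^2 by rw [sq]; exact exp_half_mul'.symm]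
  exact Real.sqrt_sq (Real.exp_pos _).le

theorem thresholds_asymptotics :
    Filter.Tendsto (fun n : ℕ => (aThresh n : ℝ) / (n : ℝ)) Filter.atTop
      (nhds (2 / (2 * Real.sqrt (Real.exp 1) +
        Real.sqrt (4 * Real.exp 1 - 6 * Real.sqrt (Real.exp 1))))) ∧
    Filter.Tendsto (fun n : ℕ => (bThresh n : ℝ) / (n : ℝ)) Filter.atTop
      (nhds (1 / Real.sqrt (Real.exp 1))) := by
  constructor
  · rw [← const_eq]
    exact a_div_tendsto
  · have h : (1:ℝ) / Real.sqrt (Real.exp 1) = Real.exp (-(1/2):ℝ) := by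
      rw [sqrt_exp_eq, Real.exp_neg, one_div]
    rw [h]
    exact b_div_tendsto
end
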